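/- arXiv:math/0703788 — 7 statements merged into one kernel-verified Lean document; each statement's English description precedes it below -/
import Mathlib

section
/- Let w be a quaternion with ‖w‖ = 1 and w ∉ ℝ (i.e. its imaginary part Im w := w − re w is nonzero). Set M := Im w / ‖Im w‖ and φ := arccos(re w), so that 0 < φ < π. Then the set of purely imaginary logarithms of w, namely {A ∈ ℍ : re A = 0 and exp A = w}, equals {(φ + 2πn)·M : n ∈ ℤ}; in particular this set is countably infinite. (Content of the paper's Proposition 2.10.2: the logarithm on the quaternions has exactly countably many branches, enumerated by n ∈ ℤ.) -/
open Quaternion Real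

lemma aux_angle (s t : ℝ) (hc : Real.cos s = Real.cos t) (hs : Real.sin s = Real.sin t) :
    ∃ n : ℤ, s = t + 2 * π * n := by
  have h : Complex.exp (s * Complex.I) = Complex.exp (t * Complex.I) := by
    rw [Complex.exp_mul_I, Complex.exp_mul_I, ← Complex.ofReal_cos, ← Complex.ofReal_cos,
      ← Complex.ofReal_sin, ← Complex.ofReal_sin, hc, hs]
  obtain ⟨n, hn⟩ := Complex.exp_eq_exp_iff_exists_int.mp h
  refine ⟨n, ?_⟩
  have h2 : (s : ℂ) * Complex.I = (t + 2 * π * n : ℝ) * Complex.I := by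
    rw [hn]; push_cast; ring
  have h3 : (s : ℂ) = ((t + 2 * π * n : ℝ) : ℂ) :=
    mul_right_cancel₀ Complex.I_ne_zero h2
  exact_mod_cast h3

/-- For a unit quaternion `w` which is not real, the set of purely imaginary
logarithms of `w` is exactly `{(φ + 2πn)·M : n ∈ ℤ}` where `M = Im w / ‖Im w‖`
and `φ = arccos (re w)`; in particular this set is countably infinite. -/
theorem quaternion_log_branches (w : Quaternion ℝ) (hw : ‖w‖ = 1)
    (him : w.im ≠ 0) :
    {A : Quaternion ℝ | A.re = 0 ∧ NormedSpace.exp A = w} =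
      {A : Quaternion ℝ | ∃ n : ℤ,
        A = (Real.arccos w.re + 2 * π * n) • (‖w.im‖⁻¹ • w.im)} ∧
    Set.Countable {A : Quaternion ℝ | A.re = 0 ∧ NormedSpace.exp A = w} ∧
    Set.Infinite {A : Quaternion ℝ | A.re = 0 ∧ NormedSpace.exp A = w} := by
  set φ := Real.arccos w.re with hφ
  set M : Quaternion ℝ := ‖w.im‖⁻¹ • w.im with hM
  have himpos : 0 < ‖w.im‖ := norm_pos_iff.mpr him
  -- Pythagorean relation
  have hpyth : w.re ^ 2 + ‖w.im‖ ^ 2 = 1 := by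
    have h1 : normSq w = 1 := by
      rw [normSq_eq_norm_mul_self, hw]; norm_num
    have h2 : ‖w.im‖ ^ 2 = normSq w.im := by
      rw [normSq_eq_norm_mul_self]; ring
    rw [h2]
    simp only [normSq_def', re_im, imI_im, imJ_im, imK_im] at *
    nlinarith [h1]
  have hre_lt : w.re < 1 := by nlinarith
  have hre_gt : -1 < w.re := by nlinarith
  have hcosφ : Real.cos φ = w.re := Real.cos_arccos hre_gt.le hre_lt.le
  have hsinφ : Real.sin φ = ‖w.im‖ := by
    rw [hφ, Real.sin_arccos]
    rw [show 1 - w.re ^ 2 = ‖w.im‖ ^ 2 by nlinarith]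
    exact Real.sqrt_sq himpos.le
  have hMnorm : ‖M‖ = 1 := by
    rw [hM, norm_smul, norm_inv, norm_norm, inv_mul_cancel₀ himpos.ne']
  have hMre : M.re = 0 := by simp [hM, Quaternion.re_smul]
  have hMne : M ≠ 0 := by
    intro h; rw [h] at hMnorm; simp at hMnorm
  have hsMM : ‖w.im‖ • M = w.im := by
    rw [hM, smul_smul, mul_inv_cancel₀ himpos.ne', one_smul]
  -- key computation: exp of s • M for sin s = ‖w.im‖
  have hexp_sM : ∀ s : ℝ, Real.sin s = ‖w.im‖ → Real.cos s = w.re →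
      NormedSpace.exp (s • M) = w := by
    intro s hsin hcos
    have hsne : s ≠ 0 := by
      intro h; rw [h, Real.sin_zero] at hsin; exact himpos.ne hsin
    have hre0 : (s • M).re = 0 := by simp [Quaternion.re_smul, hMre]
    rw [Quaternion.exp_of_re_eq_zero _ hre0]
    have hnorm : ‖s • M‖ = |s| := by rw [norm_smul, hMnorm, mul_one, Real.norm_eq_abs]
    rw [hnorm, smul_smul]
    have hsc : Real.sin |s| / |s| * s = Real.sin s := by
      rcases abs_cases s with ⟨h1, _⟩ | ⟨h1, _⟩
      · rw [h1]; field_simp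
      · rw [h1, Real.sin_neg]; field_simp
    rw [hsc, Real.cos_abs, hcos, hsin, hsMM, Quaternion.re_add_im]
  -- Set equality
  have heq : {A : Quaternion ℝ | A.re = 0 ∧ NormedSpace.exp A = w} =
      {A : Quaternion ℝ | ∃ n : ℤ, A = (φ + 2 * π * n) • M} := by
    ext A
    simp only [Set.mem_setOf_eq]
    constructor
    · rintro ⟨hAre, hAexp⟩
      rw [Quaternion.exp_of_re_eq_zero A hAre] at hAexp
      have hAne : A ≠ 0 := by
        intro h
        rw [h] at hAexp
        simp at hAexp
        rw [← hAexp] at him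
        simp at him
      have ht : 0 < ‖A‖ := norm_pos_iff.mpr hAne
      -- components
      have hwre : w.re = Real.cos ‖A‖ := by
        rw [← hAexp]
        simp [Quaternion.re_smul, hAre]
      have hwim : w.im = (Real.sin ‖A‖ / ‖A‖) • A := by
        rw [← hAexp]
        ext <;> simp [Quaternion.im_smul, hAre]
      have hAim : ‖w.im‖ = |Real.sin ‖A‖| := by
        rw [hwim, norm_smul, Real.norm_eq_abs, abs_div, abs_norm,
          div_mul_cancel₀ _ ht.ne']
      have hsin_ne : Real.sin ‖A‖ ≠ 0 := by
        intro h; rw [h, abs_zero] at hAim; exact himpos.ne' hAim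
      -- A = s • M with sin s = ‖w.im‖, cos s = w.re
      have hA_eq : ∀ s : ℝ, Real.sin s = ‖w.im‖ → Real.cos s = w.re →
          A = s • M → ∃ n : ℤ, A = (φ + 2 * π * n) • M := by
        intro s hsin hcos hAs
        obtain ⟨n, hn⟩ := aux_angle s φ (by rw [hcos, hcosφ]) (by rw [hsin, hsinφ])
        exact ⟨n, by rw [hAs, hn]⟩
      have hA2 : A = (‖A‖ / Real.sin ‖A‖) • w.im := by
        rw [hwim, smul_smul,
          show ‖A‖ / Real.sin ‖A‖ * (Real.sin ‖A‖ / ‖A‖) = 1 by field_simp, one_smul]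
      have hArec : A = (‖A‖ / Real.sin ‖A‖ * ‖w.im‖) • M := by
        rw [hM, smul_smul, mul_assoc, mul_inv_cancel₀ himpos.ne', mul_one]
        exact hA2
      rcases lt_or_gt_of_ne hsin_ne with hneg | hpos
      · -- sin ‖A‖ < 0, take s = -‖A‖
        refine hA_eq (-‖A‖) ?_ ?_ ?_
        · rw [Real.sin_neg, hAim, abs_of_neg hneg]
        · rw [Real.cos_neg, hwre]
        · conv_lhs => rw [hArec]
          rw [show ‖A‖ / Real.sin ‖A‖ * ‖w.im‖ = -‖A‖ by
            rw [hAim, abs_of_neg hneg]; field_simp]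
      · refine hA_eq ‖A‖ ?_ ?_ ?_
        · rw [hAim, abs_of_pos hpos]
        · rw [hwre]
        · conv_lhs => rw [hArec]
          rw [show ‖A‖ / Real.sin ‖A‖ * ‖w.im‖ = ‖A‖ by
            rw [hAim, abs_of_pos hpos]; field_simp]
    · rintro ⟨n, rfl⟩
      constructor
      · simp [Quaternion.re_smul, hMre]
      · refine hexp_sM _ ?_ ?_
        · rw [show φ + 2 * π * n = φ + n * (2 * π) by ring,
            Real.sin_add_int_mul_two_pi, hsinφ]
        · rw [show φ + 2 * π * n = φ + n * (2 * π) by ring,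
            Real.cos_add_int_mul_two_pi, hcosφ]
  refine ⟨heq, ?_, ?_⟩
  · rw [heq]
    have : {A : Quaternion ℝ | ∃ n : ℤ, A = (φ + 2 * π * n) • M} =
        Set.range (fun n : ℤ => (φ + 2 * π * n) • M) := by
      ext A; simp [eq_comm]
    rw [this]
    exact Set.countable_range _
  · rw [heq]
    have : {A : Quaternion ℝ | ∃ n : ℤ, A = (φ + 2 * π * n) • M} =
        Set.range (fun n : ℤ => (φ + 2 * π * n) • M) := by
      ext A; simp [eq_comm]
    rw [this]
    apply Set.infinite_range_of_injective
    intro a b hab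
    simp only at hab
    have h0 : ((φ + 2 * π * a) - (φ + 2 * π * b)) • M = 0 := by
      rw [sub_smul, hab, sub_self]
    have h1 := (smul_eq_zero.mp h0).resolve_right hMne
    have h2 : (2 * π) * ((a : ℝ) - b) = 0 := by linarith
    have h3 : (a : ℝ) - b = 0 := by
      rcases mul_eq_zero.mp h2 with h | h
      · exact absurd h (by positivity)
      · exact h
    have : (a : ℝ) = b := by linarith
    exact_mod_cast this
end

section
/- Let f : ℝ → ℍ be a one-sided original with growth exponent s₀ and constant C. Then for every quaternion p with re p > s₀ the function t ↦ f(t)·exp(−t·p) is Bochner integrable on [0,∞), the Laplace image F(p) := ∫_0^∞ f(t)·exp(−t·p) dt satisfies ‖F(p)‖ ≤ C/(re p − s₀), and F is Fréchet differentiable over ℝ at every point of the open half-space {p ∈ ℍ : re p > s₀}. (Convergence and smoothness content of the paper's Theorem 3.4: the Laplace image of every original is defined and holomorphic on the half-space re p > s₀.) -/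
open MeasureTheory Set NormedSpace

set_option maxHeartbeats 1000000
set_option synthInstance.maxHeartbeats 400000

noncomputable instance : MeasurableSpace (Quaternion ℝ) := borel _
instance : BorelSpace (Quaternion ℝ) := ⟨rfl⟩

namespace LapAux

local notation "ℍ" => Quaternion ℝ

lemma abs_re_le_norm (a : ℍ) : |a.re| ≤ ‖a‖ := by
  have h1 : Quaternion.normSq a = ‖a‖ * ‖a‖ := Quaternion.normSq_eq_norm_mul_self a
  have h2 := Quaternion.normSq_def' a
  nlinarith [norm_nonneg a, abs_nonneg a.re, sq_abs a.re, sq_nonneg a.imI, sq_nonneg a.imJ,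
    sq_nonneg a.imK]

lemma norm_im_le_norm (a : ℍ) : ‖a.im‖ ≤ ‖a‖ := by
  have h1 : Quaternion.normSq a = ‖a‖ * ‖a‖ := Quaternion.normSq_eq_norm_mul_self a
  have h1' : Quaternion.normSq a.im = ‖a.im‖ * ‖a.im‖ := Quaternion.normSq_eq_norm_mul_self a.im
  have h2 := Quaternion.normSq_def' a
  have h2' := Quaternion.normSq_def' a.im
  simp only [Quaternion.re_im, Quaternion.imI_im, Quaternion.imJ_im, Quaternion.imK_im] at h2'
  nlinarith [norm_nonneg a, norm_nonneg a.im, sq_nonneg a.re]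

lemma exp_lip {x y c : ℝ} (hx : x ≤ c) (hy : y ≤ c) :
    |Real.exp x - Real.exp y| ≤ Real.exp c * |x - y| := by
  wlog h : y ≤ x generalizing x y
  · rw [abs_sub_comm, abs_sub_comm x y]; exact this hy hx (le_of_not_ge h)
  rw [abs_of_nonneg (sub_nonneg.2 ((Real.exp_le_exp).2 h)), abs_of_nonneg (sub_nonneg.2 h)]
  have h1 : Real.exp y = Real.exp x * Real.exp (y - x) := by rw [← Real.exp_add]; ring_nf
  have h2 := Real.add_one_le_exp (y - x)
  have h3 := (Real.exp_le_exp).2 hx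
  nlinarith [Real.exp_pos x]

lemma sin_lip (a b : ℝ) : |Real.sin a - Real.sin b| ≤ |a - b| := by
  rw [Real.sin_sub_sin]
  have h1 := Real.abs_sin_le_abs (x := (a - b) / 2)
  have h2 := Real.abs_cos_le_one ((a + b) / 2)
  have h3 : |(a - b) / 2| = |a - b| / 2 := by rw [abs_div]; norm_num
  rw [abs_mul, abs_mul, abs_two]
  rw [h3] at h1
  nlinarith [abs_nonneg (Real.sin ((a-b)/2)), abs_nonneg (Real.cos ((a+b)/2)), abs_nonneg (a-b)]

lemma cos_lip (a b : ℝ) : |Real.cos a - Real.cos b| ≤ |a - b| := by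
  rw [Real.cos_sub_cos]
  have h1 := Real.abs_sin_le_abs (x := (a - b) / 2)
  have h2 := Real.abs_sin_le_one ((a + b) / 2)
  have h3 : |(a - b) / 2| = |a - b| / 2 := by rw [abs_div]; norm_num
  rw [abs_mul, abs_mul, abs_neg, abs_two]
  rw [h3] at h1
  nlinarith [abs_nonneg (Real.sin ((a-b)/2)), abs_nonneg (Real.sin ((a+b)/2)), abs_nonneg (a-b)]

lemma sinc_abs_le_one (x : ℝ) : |Real.sin x / x| ≤ 1 := by
  rcases eq_or_ne x 0 with h | h
  · simp [h]
  · rw [abs_div, div_le_one (abs_pos.2 h)]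
    exact Real.abs_sin_le_abs


lemma sinc_sub_mul_le {a b : ℝ} (hb : 0 ≤ b) (hba : b ≤ a) :
    |Real.sin a / a - Real.sin b / b| * b ≤ 2 * (a - b) := by
  rcases eq_or_lt_of_le hb with h0 | h0
  · rw [← h0, mul_zero]
    nlinarith
  · have ha : 0 < a := lt_of_lt_of_le h0 hba
    have e : Real.sin a / a - Real.sin b / b
        = (Real.sin a - Real.sin b) / a - Real.sin b * (a - b) / (a * b) := by
      field_simp
      ring
    have h1 : |Real.sin a - Real.sin b| ≤ a - b := by
      have := sin_lip a b
      rwa [abs_of_nonneg (sub_nonneg.2 hba)] at this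
    have h2 : |Real.sin b| ≤ b := by
      have := Real.abs_sin_le_abs (x := b)
      rwa [abs_of_nonneg hb] at this
    have hX : |(Real.sin a - Real.sin b) / a| ≤ (a - b) / a := by
      rw [abs_div, abs_of_pos ha]
      gcongr
    have hY : |Real.sin b * (a - b) / (a * b)| ≤ (a - b) / a := by
      rw [abs_div, abs_mul, abs_of_pos (mul_pos ha h0), abs_of_nonneg (sub_nonneg.2 hba)]
      rw [div_le_div_iff₀ (mul_pos ha h0) ha]
      nlinarith [mul_le_mul_of_nonneg_right h2 (mul_nonneg (sub_nonneg.2 hba) ha.le)]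
    calc |Real.sin a / a - Real.sin b / b| * b
        ≤ (|(Real.sin a - Real.sin b) / a| + |Real.sin b * (a - b) / (a * b)|) * b := by
          rw [e]; gcongr; exact abs_sub _ _
      _ ≤ ((a - b) / a + (a - b) / a) * b := by gcongr
      _ ≤ 2 * (a - b) := by
          rw [← add_div, div_mul_eq_mul_div, div_le_iff₀ ha]
          nlinarith

lemma g_lip (v w : ℍ) :
    ‖(Real.sin ‖v‖ / ‖v‖) • v - (Real.sin ‖w‖ / ‖w‖) • w‖ ≤ 3 * ‖v - w‖ := by
  wlog h : ‖w‖ ≤ ‖v‖ generalizing v w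
  · rw [norm_sub_rev, norm_sub_rev v w]
    exact this w v (le_of_not_ge h)
  have key : (Real.sin ‖v‖ / ‖v‖) • v - (Real.sin ‖w‖ / ‖w‖) • w
      = (Real.sin ‖v‖ / ‖v‖) • (v - w) + (Real.sin ‖v‖ / ‖v‖ - Real.sin ‖w‖ / ‖w‖) • w := by
    rw [smul_sub, sub_smul]; abel
  rw [key]
  refine le_trans (norm_add_le _ _) ?_
  rw [norm_smul, norm_smul, Real.norm_eq_abs, Real.norm_eq_abs]
  have t1 : |Real.sin ‖v‖ / ‖v‖| * ‖v - w‖ ≤ 1 * ‖v - w‖ := by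
    gcongr
    exact sinc_abs_le_one _
  have t2 : |Real.sin ‖v‖ / ‖v‖ - Real.sin ‖w‖ / ‖w‖| * ‖w‖ ≤ 2 * ‖v - w‖ := by
    refine le_trans (sinc_sub_mul_le (norm_nonneg w) h) ?_
    have := norm_sub_norm_le v w
    nlinarith
  nlinarith [norm_nonneg (v - w)]

lemma u_lip (v w : ℍ) :
    ‖(((Real.cos ‖v‖ : ℝ) : ℍ) + (Real.sin ‖v‖ / ‖v‖) • v)
      - (((Real.cos ‖w‖ : ℝ) : ℍ) + (Real.sin ‖w‖ / ‖w‖) • w)‖ ≤ 4 * ‖v - w‖ := by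
  have key : (((Real.cos ‖v‖ : ℝ) : ℍ) + (Real.sin ‖v‖ / ‖v‖) • v)
      - (((Real.cos ‖w‖ : ℝ) : ℍ) + (Real.sin ‖w‖ / ‖w‖) • w)
      = (((Real.cos ‖v‖ - Real.cos ‖w‖ : ℝ) : ℍ))
        + ((Real.sin ‖v‖ / ‖v‖) • v - (Real.sin ‖w‖ / ‖w‖) • w) := by
    push_cast
    abel
  rw [key]
  refine le_trans (norm_add_le _ _) ?_
  have t1 : ‖(((Real.cos ‖v‖ - Real.cos ‖w‖ : ℝ) : ℍ))‖ ≤ ‖v - w‖ := by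
    rw [Quaternion.norm_coe, Real.norm_eq_abs]
    calc |Real.cos ‖v‖ - Real.cos ‖w‖| ≤ |‖v‖ - ‖w‖| := cos_lip _ _
      _ ≤ ‖v - w‖ := abs_norm_sub_norm_le v w
  have t2 := g_lip v w
  nlinarith [norm_nonneg (v-w)]


lemma norm_u_eq_one (v : ℍ) (hv : v.re = 0) :
    ‖(((Real.cos ‖v‖ : ℝ) : ℍ) + (Real.sin ‖v‖ / ‖v‖) • v)‖ = 1 := by
  rw [← Quaternion.exp_of_re_eq_zero v hv, Quaternion.norm_exp, hv, exp_zero, norm_one]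

/-- Key Lipschitz estimate for the quaternionic exponential kernel. -/
lemma exp_kernel_lip {s₁ t : ℝ} (ht : 0 ≤ t) {q₁ q₂ : ℍ}
    (h1 : s₁ ≤ q₁.re) (h2 : s₁ ≤ q₂.re) :
    ‖exp (-(t • q₁)) - exp (-(t • q₂))‖
      ≤ 5 * t * Real.exp (-(s₁ * t)) * ‖q₁ - q₂‖ := by
  set a : ℍ := -(t • q₁) with ha
  set b : ℍ := -(t • q₂) with hb
  have hare : a.re = -(t * q₁.re) := by simp [ha]
  have hbre : b.re = -(t * q₂.re) := by simp [hb]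
  have haim : a.im = -(t • q₁.im) := by simp [ha]
  have hbim : b.im = -(t • q₂.im) := by simp [hb]
  rw [Quaternion.exp_eq a, Quaternion.exp_eq b]
  set u₁ : ℍ := ((Real.cos ‖a.im‖ : ℝ) : ℍ) + (Real.sin ‖a.im‖ / ‖a.im‖) • a.im with hu1
  set u₂ : ℍ := ((Real.cos ‖b.im‖ : ℝ) : ℍ) + (Real.sin ‖b.im‖ / ‖b.im‖) • b.im with hu2
  have hnu1 : ‖u₁‖ = 1 := norm_u_eq_one a.im (Quaternion.re_im a)
  have hnu2 : ‖u₂‖ = 1 := norm_u_eq_one b.im (Quaternion.re_im b)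
  have key : Real.exp a.re • u₁ - Real.exp b.re • u₂
      = (Real.exp a.re - Real.exp b.re) • u₁ + Real.exp b.re • (u₁ - u₂) := by
    rw [sub_smul, smul_sub]; abel
  rw [Real.exp_eq_exp_ℝ] at key ⊢
  rw [key]
  refine le_trans (norm_add_le _ _) ?_
  rw [norm_smul, norm_smul, hnu1, mul_one, Real.norm_eq_abs, Real.norm_eq_abs]
  rw [← Real.exp_eq_exp_ℝ]
  have hc1 : a.re ≤ -(s₁ * t) := by rw [hare]; nlinarith
  have hc2 : b.re ≤ -(s₁ * t) := by rw [hbre]; nlinarith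
  have t1 : |Real.exp a.re - Real.exp b.re| ≤ Real.exp (-(s₁ * t)) * (t * ‖q₁ - q₂‖) := by
    refine le_trans (exp_lip hc1 hc2) ?_
    have : |a.re - b.re| ≤ t * ‖q₁ - q₂‖ := by
      rw [hare, hbre]
      have : -(t * q₁.re) - -(t * q₂.re) = -(t * (q₁ - q₂).re) := by
        rw [Quaternion.re_sub]; ring
      rw [this, abs_neg, abs_mul, abs_of_nonneg ht]
      exact mul_le_mul_of_nonneg_left (abs_re_le_norm _) ht
    gcongr
  have t2 : |Real.exp b.re| * ‖u₁ - u₂‖ ≤ Real.exp (-(s₁ * t)) * (4 * (t * ‖q₁ - q₂‖)) := by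
    have h4 : ‖u₁ - u₂‖ ≤ 4 * (t * ‖q₁ - q₂‖) := by
      refine le_trans (u_lip a.im b.im) ?_
      have : a.im - b.im = -(t • (q₁ - q₂).im) := by
        rw [haim, hbim, Quaternion.im_sub, smul_sub]
        abel
      rw [this, norm_neg, norm_smul, Real.norm_eq_abs, abs_of_nonneg ht]
      have := norm_im_le_norm (q₁ - q₂)
      nlinarith
    rw [abs_of_pos (Real.exp_pos _)]
    have := Real.exp_le_exp.2 hc2
    have h0 : (0:ℝ) ≤ ‖u₁ - u₂‖ := norm_nonneg _
    nlinarith [Real.exp_pos (-(s₁ * t)), Real.exp_pos b.re]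
  nlinarith [Real.exp_pos (-(s₁ * t)), norm_nonneg (q₁ - q₂)]

lemma exp_differentiableAt (a : ℍ) : DifferentiableAt ℝ exp a := by
  have h : HasFPowerSeriesOnBall exp (expSeries ℝ ℍ) 0 (expSeries ℝ ℍ).radius :=
    hasFPowerSeriesOnBall_exp_of_radius_pos (by
      rw [expSeries_radius_eq_top]; exact ENNReal.zero_lt_top)
  have : AnalyticAt ℝ exp a := by
    refine h.analyticAt_of_mem ?_
    rw [EMetric.mem_ball, expSeries_radius_eq_top]
    exact edist_lt_top _ _
  exact this.differentiableAt


end LapAux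

open LapAux

/-- `f : ℝ → ℍ` is a one-sided original with growth exponent `s₀` and
constant `C > 0`. -/
structure IsOneSidedOriginal (f : ℝ → Quaternion ℝ) (s₀ C : ℝ) : Prop where
  posC : 0 < C
  measurable : MeasureTheory.StronglyMeasurable f
  locInt : ∀ r : ℝ, 0 < r → IntegrableOn f (Icc (-r) r)
  zero_of_neg : ∀ t : ℝ, t < 0 → f t = 0
  growth : ∀ t : ℝ, 0 ≤ t → ‖f t‖ ≤ C * Real.exp (s₀ * t)

/-- The quaternionic Laplace image of a one-sided original is defined,
bounded by `C / (re p − s₀)`, and Fréchet differentiable over `ℝ` on the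
half-space `re p > s₀` (paper's Theorem 3.4). -/
theorem laplace_image_defined_and_differentiable
    (f : ℝ → Quaternion ℝ) (s₀ C : ℝ) (hf : IsOneSidedOriginal f s₀ C) :
    (∀ p : Quaternion ℝ, s₀ < p.re →
      IntegrableOn (fun t : ℝ => f t * NormedSpace.exp (-(t • p))) (Ici 0)) ∧
    (∀ p : Quaternion ℝ, s₀ < p.re →
      ‖∫ t in Ici (0 : ℝ), f t * NormedSpace.exp (-(t • p))‖ ≤ C / (p.re - s₀)) ∧
    (∀ p : Quaternion ℝ, s₀ < p.re →
      DifferentiableAt ℝ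
        (fun q : Quaternion ℝ => ∫ t in Ici (0 : ℝ), f t * NormedSpace.exp (-(t • q)))
        p) := by
  have hexp_cont : ∀ q : Quaternion ℝ, Continuous fun t : ℝ => exp (-(t • q)) := fun q =>
    (continuous_iff_continuousAt.2 fun x => (exp_analytic (𝕂 := ℝ) x).continuousAt).comp ((continuous_id.smul continuous_const).neg)
  have hnormexp : ∀ (t : ℝ) (q : Quaternion ℝ),
      ‖exp (-(t • q))‖ = Real.exp (-(t * q.re)) := by
    intro t q
    rw [Quaternion.norm_exp]
    have h : (-(t • q)).re = -(t * q.re) := by simp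
    rw [h, ← Real.exp_eq_exp_ℝ, Real.norm_eq_abs, abs_of_pos (Real.exp_pos _)]
  have hmeas : ∀ q : Quaternion ℝ, AEStronglyMeasurable (fun t : ℝ => f t * exp (-(t • q)))
      (volume.restrict (Ici 0)) := fun q =>
    (hf.measurable.mul (hexp_cont q).stronglyMeasurable).aestronglyMeasurable
  have hbound : ∀ q : Quaternion ℝ, ∀ t ∈ Ici (0:ℝ),
      ‖f t * exp (-(t • q))‖ ≤ C * Real.exp ((s₀ - q.re) * t) := by
    intro q t ht
    calc ‖f t * exp (-(t • q))‖ ≤ ‖f t‖ * ‖exp (-(t • q))‖ := norm_mul_le _ _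
      _ ≤ (C * Real.exp (s₀ * t)) * Real.exp (-(t * q.re)) := by
          rw [hnormexp]
          exact mul_le_mul_of_nonneg_right (hf.growth t ht) (Real.exp_pos _).le
      _ = C * Real.exp ((s₀ - q.re) * t) := by
          rw [mul_assoc, ← Real.exp_add]; ring_nf
  have hboundInt : ∀ q : Quaternion ℝ, s₀ < q.re →
      IntegrableOn (fun t => C * Real.exp ((s₀ - q.re) * t)) (Ici (0:ℝ)) := by
    intro q hq
    rw [integrableOn_Ici_iff_integrableOn_Ioi]
    have h := (exp_neg_integrableOn_Ioi 0 (show 0 < q.re - s₀ by linarith)).const_mul C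
    have he : (fun t : ℝ => C * Real.exp ((s₀ - q.re) * t))
        = fun t : ℝ => C * Real.exp (-(q.re - s₀) * t) := by
      funext t; ring_nf
    rw [he]
    exact h
  have hInt : ∀ q : Quaternion ℝ, s₀ < q.re →
      IntegrableOn (fun t : ℝ => f t * exp (-(t • q))) (Ici 0) := by
    intro q hq
    exact Integrable.mono' (hboundInt q hq) (hmeas q)
      ((ae_restrict_iff' measurableSet_Ici).2 (ae_of_all _ (hbound q)))
  refine ⟨fun p hp => hInt p hp, fun p hp => ?_, fun p hp => ?_⟩
  · refine le_trans (norm_integral_le_of_norm_le (hboundInt p hp)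
      ((ae_restrict_iff' measurableSet_Ici).2 (ae_of_all _ (hbound p)))) ?_
    have hb : 0 < p.re - s₀ := by linarith
    rw [integral_Ici_eq_integral_Ioi, MeasureTheory.integral_const_mul]
    have key : ∫ t in Ioi (0:ℝ), Real.exp ((s₀ - p.re) * t) = (p.re - s₀)⁻¹ := by
      have h := integral_comp_mul_left_Ioi (fun x => Real.exp (-x)) 0 hb
      simp only [mul_zero, integral_exp_neg_Ioi, neg_zero, Real.exp_zero, smul_eq_mul,
        mul_one] at h
      rw [← h]
      congr 1 with t
      ring_nf
    rw [key, div_eq_mul_inv]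
  · -- differentiability
    set ε : ℝ := (p.re - s₀) / 2 with hε
    have hε_pos : 0 < ε := by simp only [hε]; linarith
    set s₁ : ℝ := s₀ + ε with hs₁
    have hs₁p : s₁ + ε = p.re := by simp only [hs₁, hε]; ring
    have hre : ∀ q ∈ Metric.ball p ε, s₁ ≤ q.re := by
      intro q hq
      have h1 : |(q - p).re| ≤ ‖q - p‖ := abs_re_le_norm _
      rw [Quaternion.re_sub] at h1
      have h2 : ‖q - p‖ < ε := by rwa [Metric.mem_ball, dist_eq_norm] at hq
      have := abs_le.1 h1
      linarith [this.1]
    set F' : ℝ → Quaternion ℝ →L[ℝ] Quaternion ℝ := fun t =>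
      ((ContinuousLinearMap.mul ℝ (Quaternion ℝ)) (f t)).comp
        ((fderiv ℝ exp (-(t • p))).comp
          (-(t • ContinuousLinearMap.id ℝ (Quaternion ℝ)))) with hF'
    set bound : ℝ → ℝ := fun t => 5 * C * t * Real.exp ((s₀ - s₁) * t) with hbound'
    have hF'_meas : AEStronglyMeasurable F' (volume.restrict (Ici 0)) := by
      have h1 : Measurable fun t : ℝ => fderiv ℝ exp (-(t • p)) :=
        (measurable_fderiv ℝ exp).comp
          (((continuous_id.smul continuous_const).neg).measurable)
      have h2 : Measurable fun t : ℝ => -(t • ContinuousLinearMap.id ℝ (Quaternion ℝ)) :=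
        (by fun_prop : Continuous fun t : ℝ => -(t • ContinuousLinearMap.id ℝ (Quaternion ℝ))).measurable
      have h3 : Measurable fun t : ℝ => (fderiv ℝ exp (-(t • p))).comp
          (-(t • ContinuousLinearMap.id ℝ (Quaternion ℝ))) :=
        (isBoundedBilinearMap_comp (𝕜 := ℝ)).continuous.measurable.comp (h1.prodMk h2)
      have h3' : Measurable fun t : ℝ => (ContinuousLinearMap.mul ℝ (Quaternion ℝ)) (f t) :=
        (ContinuousLinearMap.mul ℝ (Quaternion ℝ)).continuous.measurable.comp
          hf.measurable.measurable
      have h4 : Measurable F' := by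
        rw [hF']
        exact (isBoundedBilinearMap_comp (𝕜 := ℝ)).continuous.measurable.comp (h3'.prodMk h3)
      exact h4.stronglyMeasurable.aestronglyMeasurable
    have h_diff : ∀ t : ℝ, HasFDerivAt (fun q : Quaternion ℝ => f t * exp (-(t • q)))
        (F' t) p := by
      intro t
      have hL : HasFDerivAt (fun q : Quaternion ℝ => -(t • q))
          (-(t • ContinuousLinearMap.id ℝ (Quaternion ℝ))) p :=
        ((hasFDerivAt_id p).const_smul t).neg
      have hE := ((exp_differentiableAt (-(t • p))).hasFDerivAt).comp p hL
      have h5 := hE.const_mul (f t)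
      have h6 : (f t • ((fderiv ℝ exp (-(t • p))).comp
          (-(t • ContinuousLinearMap.id ℝ (Quaternion ℝ))))) = F' t := by
        rw [hF']
        ext y <;> rfl
      have h7 := h5.congr_fderiv h6
      exact h7.congr_of_eventuallyEq (Filter.Eventually.of_forall fun y => by
        simp [Function.comp])
    have h_lip : ∀ t ∈ Ici (0:ℝ), ∀ q ∈ Metric.ball p ε,
        ‖f t * exp (-(t • q)) - f t * exp (-(t • p))‖ ≤ bound t * ‖q - p‖ := by
      intro t ht q hq
      rw [← mul_sub]
      calc ‖f t * (exp (-(t • q)) - exp (-(t • p)))‖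
          ≤ ‖f t‖ * ‖exp (-(t • q)) - exp (-(t • p))‖ := norm_mul_le _ _
        _ ≤ (C * Real.exp (s₀ * t)) * (5 * t * Real.exp (-(s₁ * t)) * ‖q - p‖) := by
            refine mul_le_mul (hf.growth t ht)
              (exp_kernel_lip ht (hre q hq) (by linarith [hre q hq, hε_pos] : s₁ ≤ p.re))
              (norm_nonneg _) (mul_nonneg hf.posC.le (Real.exp_pos _).le)
        _ = bound t * ‖q - p‖ := by
            simp only [hbound']
            rw [show (s₀ - s₁) * t = s₀ * t + -(s₁ * t) by ring, Real.exp_add]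
            ring
    have bound_int : Integrable bound (volume.restrict (Ici 0)) := by
      have hg : IntegrableOn (fun t => (10 * C / ε) * Real.exp (-(ε/2) * t)) (Ici (0:ℝ)) := by
        rw [integrableOn_Ici_iff_integrableOn_Ioi]
        exact (exp_neg_integrableOn_Ioi 0 (by linarith)).const_mul _
      refine Integrable.mono' hg ?_ ?_
      · exact (((continuous_const.mul continuous_id).mul
          (Real.continuous_exp.comp (continuous_const.mul continuous_id))).aestronglyMeasurable)
      · refine (ae_restrict_iff' measurableSet_Ici).2 (ae_of_all _ (fun t ht => ?_))
        have ht0 : (0:ℝ) ≤ t := ht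
        have h5C : (0:ℝ) ≤ 5 * C := by linarith [hf.posC]
        have hts : (s₀ - s₁) * t = -(ε * t) := by simp only [hs₁]; ring
        simp only [hbound', Real.norm_eq_abs]
        rw [hts]
        have h1 : t ≤ (2/ε) * Real.exp ((ε/2) * t) := by
          have := Real.add_one_le_exp ((ε/2) * t)
          rw [div_mul_eq_mul_div, le_div_iff₀ hε_pos]
          nlinarith [Real.exp_pos ((ε/2) * t)]
        have h2 : Real.exp ((ε/2)*t) * Real.exp (-(ε * t)) = Real.exp (-(ε/2) * t) := by
          rw [← Real.exp_add]; ring_nf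
        have h3 : 0 < Real.exp (-(ε * t)) := Real.exp_pos _
        rw [abs_of_nonneg (mul_nonneg (mul_nonneg h5C ht0) (Real.exp_pos _).le)]
        have h4 := mul_le_mul_of_nonneg_right h1 h3.le
        rw [mul_assoc ((2:ℝ)/ε), h2] at h4
        have h5 := mul_le_mul_of_nonneg_left h4 h5C
        calc 5 * C * t * Real.exp (-(ε * t)) = 5 * C * (t * Real.exp (-(ε * t))) := by ring
          _ ≤ 5 * C * (2 / ε * Real.exp (-(ε/2) * t)) := h5
          _ = 10 * C / ε * Real.exp (-(ε/2) * t) := by ring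
    have main := hasFDerivAt_integral_of_dominated_loc_of_lip'
      (F := fun (q : Quaternion ℝ) (t : ℝ) => f t * exp (-(t • q)))
      (μ := volume.restrict (Ici (0:ℝ))) (bound := bound)
      (Metric.ball_mem_nhds p hε_pos) (fun q _ => hmeas q) (hInt p hp) hF'_meas
      ((ae_restrict_iff' measurableSet_Ici).2 (ae_of_all _ h_lip))
      bound_int (ae_of_all _ h_diff)
    exact main.2.differentiableAt
end

section
/- Let f₁, f₂ : ℝ → ℍ be one-sided originals with growth exponent s₀ (and some constants C₁, C₂), and suppose their Laplace images coincide on the half-space: ∫_0^∞ f₁(t)·exp(−t·p) dt = ∫_0^∞ f₂(t)·exp(−t·p) dt for every quaternion p with re p > s₀. Then f₁(t) = f₂(t) at every point t ∈ ℝ at which both f₁ and f₂ are continuous. (Paper's Theorem 3.7: an original is completely defined by its image up to values at points of discontinuity.) -/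
open MeasureTheory Set Filter
open scoped FourierTransform Real

noncomputable section LaplaceAux

/-- quaternion with only real and `i` components -/
noncomputable def mkQ (r θ : ℝ) : Quaternion ℝ := ⟨r, θ, 0, 0⟩

@[simp] lemma mkQ_re (r θ : ℝ) : (mkQ r θ).re = r := rfl
@[simp] lemma mkQ_imI (r θ : ℝ) : (mkQ r θ).imI = θ := rfl
@[simp] lemma mkQ_imJ (r θ : ℝ) : (mkQ r θ).imJ = 0 := rfl
@[simp] lemma mkQ_imK (r θ : ℝ) : (mkQ r θ).imK = 0 := rfl

lemma sin_abs_helper (θ : ℝ) : Real.sin |θ| / |θ| * θ = Real.sin θ := by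
  rcases eq_or_ne θ 0 with h | h
  · simp [h]
  rcases lt_or_gt_of_ne h with h' | h'
  · rw [abs_of_neg h', Real.sin_neg]
    field_simp
  · rw [abs_of_pos h']
    field_simp

lemma exp_mkQ (r θ : ℝ) :
    NormedSpace.exp (mkQ r θ) = mkQ (Real.exp r * Real.cos θ) (Real.exp r * Real.sin θ) := by
  have him : (mkQ r θ).im = mkQ 0 θ := by ext <;> simp
  have hnorm : ‖mkQ 0 θ‖ = |θ| := by
    rw [norm_eq_sqrt_real_inner, Quaternion.inner_self]
    rw [Quaternion.normSq_def']
    simp [mkQ, Real.sqrt_sq_eq_abs]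
  rw [Quaternion.exp_eq, him, hnorm]
  have : (mkQ r θ).re = r := rfl
  rw [this]
  ext <;>
    simp [Quaternion.re_smul, Quaternion.imI_smul, Real.cos_abs, sin_abs_helper,
      ← Real.exp_eq_exp_ℝ]

/-- the first complex projection of a quaternion -/
noncomputable def L1 : Quaternion ℝ →L[ℝ] ℂ :=
  LinearMap.toContinuousLinearMap
    { toFun := fun q => ⟨q.re, q.imI⟩
      map_add' := fun a b => by apply Complex.ext <;> simp
      map_smul' := fun c a => by apply Complex.ext <;> simp [Complex.real_smul] }

/-- the second complex projection of a quaternion -/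
noncomputable def L2 : Quaternion ℝ →L[ℝ] ℂ :=
  LinearMap.toContinuousLinearMap
    { toFun := fun q => ⟨q.imJ, q.imK⟩
      map_add' := fun a b => by apply Complex.ext <;> simp
      map_smul' := fun c a => by apply Complex.ext <;> simp [Complex.real_smul] }

@[simp] lemma L1_apply (q : Quaternion ℝ) : L1 q = ⟨q.re, q.imI⟩ := rfl
@[simp] lemma L2_apply (q : Quaternion ℝ) : L2 q = ⟨q.imJ, q.imK⟩ := rfl

lemma abs_re_le_normQ (q : Quaternion ℝ) : |q.re| ≤ ‖q‖ := by
  have h : q.re ^ 2 ≤ ‖q‖ ^ 2 := by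
    have := Quaternion.normSq_def' q
    rw [Quaternion.normSq_eq_norm_mul_self] at this
    nlinarith [sq_nonneg q.imI, sq_nonneg q.imJ, sq_nonneg q.imK]
  calc |q.re| = Real.sqrt (q.re ^ 2) := (Real.sqrt_sq_eq_abs _).symm
    _ ≤ Real.sqrt (‖q‖ ^ 2) := Real.sqrt_le_sqrt h
    _ = ‖q‖ := Real.sqrt_sq (norm_nonneg q)

lemma abs_imI_le_normQ (q : Quaternion ℝ) : |q.imI| ≤ ‖q‖ := by
  have h : q.imI ^ 2 ≤ ‖q‖ ^ 2 := by
    have := Quaternion.normSq_def' q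
    rw [Quaternion.normSq_eq_norm_mul_self] at this
    nlinarith [sq_nonneg q.re, sq_nonneg q.imJ, sq_nonneg q.imK]
  calc |q.imI| = Real.sqrt (q.imI ^ 2) := (Real.sqrt_sq_eq_abs _).symm
    _ ≤ Real.sqrt (‖q‖ ^ 2) := Real.sqrt_le_sqrt h
    _ = ‖q‖ := Real.sqrt_sq (norm_nonneg q)

lemma abs_imJ_le_normQ (q : Quaternion ℝ) : |q.imJ| ≤ ‖q‖ := by
  have h : q.imJ ^ 2 ≤ ‖q‖ ^ 2 := by
    have := Quaternion.normSq_def' q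
    rw [Quaternion.normSq_eq_norm_mul_self] at this
    nlinarith [sq_nonneg q.re, sq_nonneg q.imI, sq_nonneg q.imK]
  calc |q.imJ| = Real.sqrt (q.imJ ^ 2) := (Real.sqrt_sq_eq_abs _).symm
    _ ≤ Real.sqrt (‖q‖ ^ 2) := Real.sqrt_le_sqrt h
    _ = ‖q‖ := Real.sqrt_sq (norm_nonneg q)

lemma abs_imK_le_normQ (q : Quaternion ℝ) : |q.imK| ≤ ‖q‖ := by
  have h : q.imK ^ 2 ≤ ‖q‖ ^ 2 := by
    have := Quaternion.normSq_def' q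
    rw [Quaternion.normSq_eq_norm_mul_self] at this
    nlinarith [sq_nonneg q.re, sq_nonneg q.imI, sq_nonneg q.imJ]
  calc |q.imK| = Real.sqrt (q.imK ^ 2) := (Real.sqrt_sq_eq_abs _).symm
    _ ≤ Real.sqrt (‖q‖ ^ 2) := Real.sqrt_le_sqrt h
    _ = ‖q‖ := Real.sqrt_sq (norm_nonneg q)

lemma cmul (θ e a b : ℝ) :
    Complex.exp ((θ : ℂ) * Complex.I) * ((e : ℂ) * ⟨a, b⟩) =
      ⟨e * (a * Real.cos θ - b * Real.sin θ), e * (b * Real.cos θ + a * Real.sin θ)⟩ := by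
  apply Complex.ext <;>
    simp [Complex.exp_ofReal_mul_I_re, Complex.exp_ofReal_mul_I_im, Complex.mul_re,
      Complex.mul_im] <;> ring

/-- the key pointwise identity for the (re, imI) components -/
lemma key1 (q : Quaternion ℝ) (σ ω x : ℝ) :
    (𝐞 (-(x * ω)) : Circle) • ((Real.exp (-(σ * x)) : ℂ) * (⟨q.re, q.imI⟩ : ℂ)) =
      L1 (q * NormedSpace.exp (-(x • mkQ σ (2 * π * ω)))) := by
  have h1 : -(x • mkQ σ (2 * π * ω)) = mkQ (-(σ * x)) (-(2 * π * (ω * x))) := by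
    ext <;> simp [Quaternion.re_smul] <;> ring
  rw [h1, exp_mkQ, Circle.smul_def, Real.fourierChar_apply, smul_eq_mul, cmul]
  have h2 : 2 * π * -(x * ω) = -(2 * π * (ω * x)) := by ring
  rw [h2]
  apply Complex.ext <;>
    simp [Quaternion.re_mul, Quaternion.imI_mul] <;> ring

/-- the key pointwise identity for the (imJ, imK) components -/
lemma key2 (q : Quaternion ℝ) (σ ω x : ℝ) :
    (𝐞 (-(x * ω)) : Circle) • ((Real.exp (-(σ * x)) : ℂ) * (⟨q.imJ, q.imK⟩ : ℂ)) =
      L2 (q * NormedSpace.exp (-(x • mkQ σ (-(2 * π * ω))))) := by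
  have h1 : -(x • mkQ σ (-(2 * π * ω))) = mkQ (-(σ * x)) (2 * π * (ω * x)) := by
    ext <;> simp [Quaternion.re_smul] <;> ring
  rw [h1, exp_mkQ, Circle.smul_def, Real.fourierChar_apply, smul_eq_mul, cmul]
  have h2 : 2 * π * -(x * ω) = -(2 * π * (ω * x)) := by ring
  rw [h2]
  apply Complex.ext <;>
    simp [Quaternion.imJ_mul, Quaternion.imK_mul] <;> ring

end LaplaceAux

/-- An original is completely determined by its Laplace image, up to values
at points of discontinuity (paper's Theorem 3.7). -/
theorem laplace_image_determines_original
    (f₁ f₂ : ℝ → Quaternion ℝ) (s₀ C₁ C₂ : ℝ)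
    (hf₁ : IsOneSidedOriginal f₁ s₀ C₁) (hf₂ : IsOneSidedOriginal f₂ s₀ C₂)
    (heq : ∀ p : Quaternion ℝ, s₀ < p.re →
      (∫ t in Ici (0 : ℝ), f₁ t * NormedSpace.exp (-(t • p))) =
      ∫ t in Ici (0 : ℝ), f₂ t * NormedSpace.exp (-(t • p)))
    (t : ℝ) (hc₁ : ContinuousAt f₁ t) (hc₂ : ContinuousAt f₂ t) :
    f₁ t = f₂ t := by
  classical
  set σ : ℝ := s₀ + 1 with hσdef
  -- norm of the exponential factor
  have hEnorm : ∀ (p : Quaternion ℝ) (x : ℝ),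
      ‖NormedSpace.exp (-(x • p))‖ = Real.exp (-(x * p.re)) := by
    intro p x
    rw [Quaternion.norm_exp]
    have : (-(x • p)).re = -(x * p.re) := by simp [Quaternion.re_smul]
    rw [this, ← Real.exp_eq_exp_ℝ, Real.norm_eq_abs, abs_of_pos (Real.exp_pos _)]
  -- continuity of the exponential factor in x
  have hEcont : ∀ p : Quaternion ℝ,
      Continuous (fun x : ℝ => NormedSpace.exp (-(x • p))) := by
    intro p
    exact (continuous_iff_continuousAt.2 fun y =>
      (NormedSpace.exp_analytic (𝕂 := ℝ) y).continuousAt).comp ((continuous_id.smul continuous_const).neg)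
  -- integrability of f * exp(-(x • p)) over all of ℝ
  have hint : ∀ (f : ℝ → Quaternion ℝ) (C : ℝ), IsOneSidedOriginal f s₀ C →
      ∀ p : Quaternion ℝ, s₀ < p.re →
        Integrable (fun x : ℝ => f x * NormedSpace.exp (-(x • p))) := by
    intro f C hf p hp
    have hsupp : Function.support (fun x : ℝ => f x * NormedSpace.exp (-(x • p))) ⊆
        Ici (0 : ℝ) := by
      intro x hx
      by_contra hx0
      simp only [mem_Ici, not_le] at hx0
      exact hx (by simp [hf.zero_of_neg x hx0])
    rw [← integrableOn_iff_integrable_of_support_subset hsupp]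
    have hmeas : AEStronglyMeasurable (fun x : ℝ => f x * NormedSpace.exp (-(x • p)))
        (volume.restrict (Ici (0 : ℝ))) :=
      (hf.measurable.aestronglyMeasurable.mul (hEcont p).aestronglyMeasurable).restrict
    have hbint : IntegrableOn (fun x : ℝ => C * Real.exp (-((p.re - s₀) * x))) (Ici (0 : ℝ)) := by
      have h0 : (0 : ℝ) < p.re - s₀ := by linarith
      rw [integrableOn_Ici_iff_integrableOn_Ioi]
      simp only [← neg_mul]
      exact (exp_neg_integrableOn_Ioi 0 h0).const_mul C
    refine hbint.mono' hmeas ?_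
    filter_upwards [ae_restrict_mem measurableSet_Ici] with x hx
    calc ‖f x * NormedSpace.exp (-(x • p))‖
        ≤ ‖f x‖ * ‖NormedSpace.exp (-(x • p))‖ := norm_mul_le _ _
      _ ≤ (C * Real.exp (s₀ * x)) * Real.exp (-(x * p.re)) := by
          rw [hEnorm p x]
          exact mul_le_mul_of_nonneg_right (hf.growth x hx) (Real.exp_pos _).le
      _ = C * Real.exp (-((p.re - s₀) * x)) := by
          rw [mul_assoc, ← Real.exp_add]
          ring_nf
  -- difference
  set g : ℝ → Quaternion ℝ := fun x => f₁ x - f₂ x with hgdef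
  have hgzero : ∀ x < (0 : ℝ), g x = 0 := by
    intro x hx
    simp [hgdef, hf₁.zero_of_neg x hx, hf₂.zero_of_neg x hx]
  have hgint : ∀ p : Quaternion ℝ, s₀ < p.re →
      Integrable (fun x : ℝ => g x * NormedSpace.exp (-(x • p))) := by
    intro p hp
    have := (hint f₁ C₁ hf₁ p hp).sub (hint f₂ C₂ hf₂ p hp)
    simpa [hgdef, sub_mul, Pi.sub_def] using this
  have hgzeroint : ∀ p : Quaternion ℝ, s₀ < p.re →
      (∫ x : ℝ, g x * NormedSpace.exp (-(x • p))) = 0 := by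
    intro p hp
    have h1 := hint f₁ C₁ hf₁ p hp
    have h2 := hint f₂ C₂ hf₂ p hp
    have e1 : (∫ x : ℝ, f₁ x * NormedSpace.exp (-(x • p))) =
        ∫ x in Ici (0 : ℝ), f₁ x * NormedSpace.exp (-(x • p)) := by
      refine (setIntegral_eq_integral_of_forall_compl_eq_zero fun x hx => ?_).symm
      simp only [mem_Ici, not_le] at hx
      simp [hf₁.zero_of_neg x hx]
    have e2 : (∫ x : ℝ, f₂ x * NormedSpace.exp (-(x • p))) =
        ∫ x in Ici (0 : ℝ), f₂ x * NormedSpace.exp (-(x • p)) := by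
      refine (setIntegral_eq_integral_of_forall_compl_eq_zero fun x hx => ?_).symm
      simp only [mem_Ici, not_le] at hx
      simp [hf₂.zero_of_neg x hx]
    have : (fun x : ℝ => g x * NormedSpace.exp (-(x • p))) =
        fun x : ℝ => f₁ x * NormedSpace.exp (-(x • p)) -
          f₂ x * NormedSpace.exp (-(x • p)) := by
      funext x; simp [hgdef, sub_mul]
    rw [this, integral_sub h1 h2, e1, e2, heq p hp, sub_self]
  -- bound for g
  obtain ⟨K, hK0, hKbound⟩ : ∃ K : ℝ, 0 < K ∧ ∀ x : ℝ, 0 ≤ x → ‖g x‖ ≤ K * Real.exp (s₀ * x) := by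
    refine ⟨C₁ + C₂, add_pos hf₁.posC hf₂.posC, fun x hx => ?_⟩
    calc ‖g x‖ ≤ ‖f₁ x‖ + ‖f₂ x‖ := norm_sub_le _ _
      _ ≤ C₁ * Real.exp (s₀ * x) + C₂ * Real.exp (s₀ * x) :=
          add_le_add (hf₁.growth x hx) (hf₂.growth x hx)
      _ = (C₁ + C₂) * Real.exp (s₀ * x) := by ring
  -- continuity and measurability of g
  have hgmeas : StronglyMeasurable g := hf₁.measurable.sub hf₂.measurable
  have hgcont : ContinuousAt g t := hc₁.sub hc₂
  -- the two complex component functions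
  have comp_zero : ∀ u : ℝ → ℂ,
      Integrable u → ContinuousAt u t → (∀ ω : ℝ, 𝓕 u ω = 0) → u t = 0 := by
    intro u hu hucont hFu
    have hFu' : 𝓕 u = fun _ => (0 : ℂ) := funext hFu
    have h'u : Integrable (𝓕 u) := by rw [hFu']; exact integrable_zero _ _ _
    have hinv := hu.fourierInv_fourier_eq h'u hucont
    rw [hFu'] at hinv
    have h0 : 𝓕⁻ (fun _ : ℝ => (0 : ℂ)) t = 0 := by
      simp [Real.fourierInv_eq]
    rw [h0] at hinv
    exact hinv.symm
  -- integrability / continuity for component functions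
  have hcomp : ∀ φ : Quaternion ℝ → ℝ, Continuous φ → (∀ q, |φ q| ≤ ‖q‖) → φ 0 = 0 →
      ∀ ψ : Quaternion ℝ → ℝ, Continuous ψ → (∀ q, |ψ q| ≤ ‖q‖) → ψ 0 = 0 →
      Integrable (fun x : ℝ => (Real.exp (-(σ * x)) : ℂ) * ⟨φ (g x), ψ (g x)⟩) ∧
      ContinuousAt (fun x : ℝ => (Real.exp (-(σ * x)) : ℂ) * ⟨φ (g x), ψ (g x)⟩) t := by
    intro φ hφ hφle hφ0 ψ hψ hψle hψ0
    set u : ℝ → ℂ := fun x => (Real.exp (-(σ * x)) : ℂ) * ⟨φ (g x), ψ (g x)⟩ with hudef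
    have humk : ∀ x, u x = (Real.exp (-(σ * x)) : ℂ) *
        ((φ (g x) : ℂ) + (ψ (g x) : ℂ) * Complex.I) := by
      intro x
      rw [hudef]
      apply Complex.ext <;> simp
    constructor
    · -- integrable
      have hsupp : Function.support u ⊆ Ici (0 : ℝ) := by
        intro x hx
        by_contra hx0
        simp only [mem_Ici, not_le] at hx0
        apply hx
        have hz : (⟨φ (g x), ψ (g x)⟩ : ℂ) = 0 := by
          rw [hgzero x hx0]
          apply Complex.ext <;> simp [hφ0, hψ0]
        simp [hudef, hz]
      rw [← integrableOn_iff_integrable_of_support_subset hsupp]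
      have hmeas : AEStronglyMeasurable u (volume.restrict (Ici (0 : ℝ))) := by
        apply AEStronglyMeasurable.restrict
        apply AEStronglyMeasurable.mul
        · exact (Complex.continuous_ofReal.comp
            (Real.continuous_exp.comp (continuous_const.mul continuous_id).neg)).aestronglyMeasurable
        · have h1 : StronglyMeasurable (fun x => φ (g x)) := hφ.comp_stronglyMeasurable hgmeas
          have h2 : StronglyMeasurable (fun x => ψ (g x)) := hψ.comp_stronglyMeasurable hgmeas
          have : StronglyMeasurable (fun x : ℝ => ((φ (g x) : ℂ) + (ψ (g x) : ℂ) * Complex.I)) :=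
            (Complex.continuous_ofReal.comp_stronglyMeasurable h1).add
              ((Complex.continuous_ofReal.comp_stronglyMeasurable h2).mul_const _)
          apply this.aestronglyMeasurable.congr
          filter_upwards with x
          apply Complex.ext <;> simp
      have hbint : IntegrableOn (fun x : ℝ => 2 * K * Real.exp (-((σ - s₀) * x)))
          (Ici (0 : ℝ)) := by
        have h0 : (0 : ℝ) < σ - s₀ := by rw [hσdef]; linarith
        rw [integrableOn_Ici_iff_integrableOn_Ioi]
        simp only [← neg_mul]
        exact (exp_neg_integrableOn_Ioi 0 h0).const_mul (2 * K)
      refine hbint.mono' hmeas ?_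
      filter_upwards [ae_restrict_mem measurableSet_Ici] with x hx
      have hnorm : ‖u x‖ ≤ Real.exp (-(σ * x)) * (2 * ‖g x‖) := by
        rw [hudef]
        simp only [norm_mul, Complex.norm_real, Real.norm_eq_abs,
          abs_of_pos (Real.exp_pos _)]
        gcongr
        calc ‖(⟨φ (g x), ψ (g x)⟩ : ℂ)‖ ≤ |φ (g x)| + |ψ (g x)| := by
              simpa using Complex.norm_le_abs_re_add_abs_im ⟨φ (g x), ψ (g x)⟩
          _ ≤ ‖g x‖ + ‖g x‖ := add_le_add (hφle _) (hψle _)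
          _ = 2 * ‖g x‖ := by ring
      calc ‖u x‖ ≤ Real.exp (-(σ * x)) * (2 * ‖g x‖) := hnorm
        _ ≤ Real.exp (-(σ * x)) * (2 * (K * Real.exp (s₀ * x))) := by
            gcongr
            exact hKbound x hx
        _ = 2 * K * Real.exp (-((σ - s₀) * x)) := by
            rw [mul_comm (Real.exp _)]
            rw [mul_assoc, mul_assoc, ← Real.exp_add]
            ring_nf
    · -- continuous at t
      have h1 : ContinuousAt (fun x : ℝ => ((Real.exp (-(σ * x)) : ℝ) : ℂ)) t :=
        (Complex.continuous_ofReal.comp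
          (Real.continuous_exp.comp (continuous_const.mul continuous_id).neg)).continuousAt
      have h2 : ContinuousAt (fun x : ℝ => ((φ (g x) : ℂ) + (ψ (g x) : ℂ) * Complex.I)) t := by
        apply ContinuousAt.add
        · exact (Complex.continuous_ofReal.continuousAt).comp
            ((hφ.continuousAt).comp hgcont)
        · exact ((Complex.continuous_ofReal.continuousAt).comp
            ((hψ.continuousAt).comp hgcont)).mul continuousAt_const
      have := h1.mul h2
      apply this.congr
      filter_upwards with x
      rw [humk]
      rfl
  -- first component pair
  have hre : Continuous (fun q : Quaternion ℝ => q.re) := Quaternion.continuous_re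
  have himI : Continuous (fun q : Quaternion ℝ => q.imI) := Quaternion.continuous_imI
  have himJ : Continuous (fun q : Quaternion ℝ => q.imJ) := Quaternion.continuous_imJ
  have himK : Continuous (fun q : Quaternion ℝ => q.imK) := Quaternion.continuous_imK
  obtain ⟨hu1int, hu1cont⟩ := hcomp _ hre abs_re_le_normQ rfl _ himI abs_imI_le_normQ rfl
  obtain ⟨hu2int, hu2cont⟩ := hcomp _ himJ abs_imJ_le_normQ rfl _ himK abs_imK_le_normQ rfl
  set u₁ : ℝ → ℂ := fun x => (Real.exp (-(σ * x)) : ℂ) * ⟨(g x).re, (g x).imI⟩ with hu1def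
  set u₂ : ℝ → ℂ := fun x => (Real.exp (-(σ * x)) : ℂ) * ⟨(g x).imJ, (g x).imK⟩ with hu2def
  -- Fourier transforms vanish
  have hF1 : ∀ ω : ℝ, 𝓕 u₁ ω = 0 := by
    intro ω
    have hp : s₀ < (mkQ σ (2 * π * ω)).re := by
      rw [mkQ_re, hσdef]; linarith
    rw [Real.fourier_real_eq]
    have hpt : ∀ x : ℝ, (𝐞 (-(x * ω)) : Circle) • u₁ x =
        L1 (g x * NormedSpace.exp (-(x • mkQ σ (2 * π * ω)))) := fun x => key1 (g x) σ ω x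
    rw [integral_congr_ae (Filter.Eventually.of_forall hpt)]
    rw [L1.integral_comp_comm (hgint _ hp), hgzeroint _ hp]
    simp [Complex.ext_iff, Quaternion.re_zero, Quaternion.imI_zero, Quaternion.imJ_zero,
      Quaternion.imK_zero]
  have hF2 : ∀ ω : ℝ, 𝓕 u₂ ω = 0 := by
    intro ω
    have hp : s₀ < (mkQ σ (-(2 * π * ω))).re := by
      rw [mkQ_re, hσdef]; linarith
    rw [Real.fourier_real_eq]
    have hpt : ∀ x : ℝ, (𝐞 (-(x * ω)) : Circle) • u₂ x =
        L2 (g x * NormedSpace.exp (-(x • mkQ σ (-(2 * π * ω))))) := fun x => key2 (g x) σ ω x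
    rw [integral_congr_ae (Filter.Eventually.of_forall hpt)]
    rw [L2.integral_comp_comm (hgint _ hp), hgzeroint _ hp]
    simp [Complex.ext_iff, Quaternion.re_zero, Quaternion.imI_zero, Quaternion.imJ_zero,
      Quaternion.imK_zero]
  -- conclude u₁ t = u₂ t = 0
  have h1 := comp_zero u₁ hu1int hu1cont hF1
  have h2 := comp_zero u₂ hu2int hu2cont hF2
  have hexp : ((Real.exp (-(σ * t)) : ℝ) : ℂ) ≠ 0 := by
    simp [Real.exp_ne_zero]
  rw [hu1def] at h1
  rw [hu2def] at h2
  simp only [mul_eq_zero] at h1 h2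
  rcases h1 with h1 | h1; · exact absurd h1 hexp
  rcases h2 with h2 | h2; · exact absurd h2 hexp
  have hgt : g t = 0 := by
    have e1 : (g t).re = 0 := by simpa using congrArg Complex.re h1
    have e2 : (g t).imI = 0 := by simpa using congrArg Complex.im h1
    have e3 : (g t).imJ = 0 := by simpa using congrArg Complex.re h2
    have e4 : (g t).imK = 0 := by simpa using congrArg Complex.im h2
    ext <;> simp [e1, e2, e3, e4, Quaternion.re_zero, Quaternion.imI_zero,
      Quaternion.imJ_zero, Quaternion.imK_zero]
  have := hgt
  rw [hgdef] at this
  exact sub_eq_zero.mp (by simpa using this)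
end

section
/- For every real α > 0 and every quaternion p, the two-sided Laplace transform of the Gaussian is: ∫_{−∞}^{∞} exp(−(α·t²)·1 − t·p) dt = (π/α)^{1/2}·exp(p²/(4α)), where the integrand is the quaternionic exponential of the quaternion −α·t² − t·p and p² is the quaternion square. (Paper's Example 3.13.) -/
open MeasureTheory Real

lemma quat_exists_unit (p : Quaternion ℝ) :
    ∃ u : Quaternion ℝ, u * u = -1 ∧ p = algebraMap ℝ _ p.re + ‖p.im‖ • u := by
  by_cases h : p.im = 0
  · refine ⟨(show Quaternion ℝ from ⟨0,1,0,0⟩), ?_, ?_⟩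
    · apply Quaternion.ext <;> erw [QuaternionAlgebra.mk_mul_mk] <;> simp <;> rfl
    · rw [h, norm_zero, zero_smul, add_zero]
      conv_lhs => rw [← p.re_add_im, h, add_zero]
      rfl
  · refine ⟨‖p.im‖⁻¹ • p.im, ?_, ?_⟩
    · have hs : star p.im = -p.im := by ext <;> simp
      have h0 := Quaternion.self_mul_star p.im
      rw [hs, mul_neg, neg_eq_iff_eq_neg] at h0
      have hn : ‖p.im‖ ≠ 0 := norm_ne_zero_iff.mpr h
      rw [smul_mul_smul_comm, h0, Quaternion.normSq_eq_norm_mul_self, smul_neg,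
        Quaternion.smul_coe]
      rw [show ‖p.im‖⁻¹ * ‖p.im‖⁻¹ * (‖p.im‖ * ‖p.im‖) = 1 by field_simp]
      simp
    · rw [smul_inv_smul₀ (norm_ne_zero_iff.mpr h)]
      exact (p.re_add_im).symm.trans (by rfl)

/-- Two-sided quaternionic Laplace transform of the Gaussian
(paper's Example 3.13). -/
theorem gaussian_two_sided_laplace (α : ℝ) (hα : 0 < α) (p : Quaternion ℝ) :
    (∫ t : ℝ, NormedSpace.exp ((-(α * t ^ 2)) • (1 : Quaternion ℝ) - t • p)) =
      Real.sqrt (π / α) • NormedSpace.exp ((4 * α)⁻¹ • (p ^ 2)) := by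
  obtain ⟨u, hu, hp⟩ := quat_exists_unit p
  set φ : ℂ →ₐ[ℝ] Quaternion ℝ := Complex.liftAux u hu with hφ
  have hφc : Continuous φ := φ.toLinearMap.continuous_of_finiteDimensional
  set z : ℂ := ⟨p.re, ‖p.im‖⟩ with hz
  have hφz : φ z = p := by
    rw [hφ, Complex.liftAux_apply]
    exact hp.symm
  set L : ℂ →L[ℝ] Quaternion ℝ := ⟨φ.toLinearMap, hφc⟩ with hL
  have hexpC : ∀ w : ℂ, Complex.exp w = NormedSpace.exp w := by
    intro w
    rw [Complex.exp_eq_exp_ℂ]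
  have harg : ∀ t : ℝ, ((-(α * t ^ 2)) • (1 : Quaternion ℝ) - t • p)
      = φ (-(α:ℂ) * t ^ 2 + (-z) * t + 0) := by
    intro t
    have : (-(α:ℂ) * t ^ 2 + (-z) * t + 0) = (-(α * t^2)) • (1:ℂ) - t • z := by
      push_cast [Complex.real_smul]
      ring
    rw [this, map_sub, _root_.map_smul, _root_.map_smul, map_one, hφz]
  have hInt : Integrable (fun t : ℝ ↦ Complex.exp (-(α:ℂ) * t ^ 2 + (-z) * t + 0)) :=
    integrable_cexp_quadratic' (by simpa using hα) _ _
  calc (∫ t : ℝ, NormedSpace.exp ((-(α * t ^ 2)) • (1 : Quaternion ℝ) - t • p))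
      = ∫ t : ℝ, L (Complex.exp (-(α:ℂ) * t ^ 2 + (-z) * t + 0)) := by
        refine integral_congr_ae (Filter.Eventually.of_forall fun t => ?_)
        beta_reduce
        rw [harg t, hexpC,
          show L (NormedSpace.exp (-(α:ℂ) * t ^ 2 + (-z) * t + 0))
            = φ (NormedSpace.exp (-(α:ℂ) * t ^ 2 + (-z) * t + 0)) from rfl]
        exact (NormedSpace.map_exp φ hφc _).symm
    _ = L (∫ t : ℝ, Complex.exp (-(α:ℂ) * t ^ 2 + (-z) * t + 0)) :=
        L.integral_comp_comm hInt
    _ = L ((↑π / -(-(α:ℂ))) ^ (1 / 2 : ℂ) * Complex.exp (0 - (-z) ^ 2 / (4 * -(α:ℂ)))) := by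
        rw [integral_cexp_quadratic (by simpa using hα) (-z) 0]
    _ = Real.sqrt (π / α) • NormedSpace.exp ((4 * α)⁻¹ • (p ^ 2)) := by
        have h1 : (0 - (-z) ^ 2 / (4 * -(α:ℂ))) = ((4 * α)⁻¹ : ℝ) • z ^ 2 := by
          push_cast [Complex.real_smul]
          have h2 : (α:ℂ) ≠ 0 := by exact_mod_cast hα.ne'
          field_simp
          ring
        have h2 : ((↑π / -(-(α:ℂ))) ^ (1 / 2 : ℂ)) = ((Real.sqrt (π / α) : ℝ) : ℂ) := by
          rw [neg_neg, Real.sqrt_eq_rpow,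
            Complex.ofReal_cpow (le_of_lt (div_pos Real.pi_pos hα))]
          push_cast
          ring_nf
        rw [h1, h2, ← Complex.real_smul, L.map_smul]
        congr 1
        rw [hexpC]
        show φ (NormedSpace.exp (((4 * α)⁻¹ : ℝ) • z ^ 2)) = _
        rw [NormedSpace.map_exp φ hφc]
        congr 1
        show φ (((4 * α)⁻¹ : ℝ) • z ^ 2) = _
        rw [_root_.map_smul, map_pow, hφz]
end

section
/- For every complex number p with −1 < Re p < 0, ∫_{−∞}^{∞} exp(−p·t)/(e^t + 1) dt = −π/sin(π·p), the integral being absolutely convergent. (Paper's Example 3.15.3, computed via the Euler integral of the first kind.) -/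
open MeasureTheory Real Complex Set

lemma cpow_eq_cexp {x : ℝ} (hx : 0 < x) (s : ℂ) :
    (x : ℂ) ^ s = Complex.exp (s * (Real.log x : ℂ)) := by
  rw [Complex.cpow_def_of_ne_zero (by exact_mod_cast hx.ne'),
    ← Complex.ofReal_log hx.le, mul_comm]

lemma fermi_key (p : ℂ) :
    ∀ t : ℝ, (Real.exp t / (1 + Real.exp t) ^ 2 : ℝ) •
        ((((Real.exp t / (1 + Real.exp t) : ℝ) : ℂ)) ^ (-p - 1) *
          (1 - ((Real.exp t / (1 + Real.exp t) : ℝ) : ℂ)) ^ (1 + p - 1)) =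
      Complex.exp (-(p * t)) / (Real.exp t + 1) := by
  intro t
  set E := Real.exp t with hEdef
  have hE : 0 < E := Real.exp_pos t
  have hD : 0 < 1 + E := by linarith
  set L := Real.log (1 + E) with hL
  have hDc : ((1 : ℂ) + (E : ℂ)) ≠ 0 := by exact_mod_cast hD.ne'
  have h1 : (1 : ℂ) - ((E / (1 + E) : ℝ) : ℂ) = (((1 + E)⁻¹ : ℝ) : ℂ) := by
    push_cast
    field_simp
    ring
  have h2 : ((E / (1 + E) : ℝ) : ℂ) ^ (-p - 1)
      = Complex.exp ((-p - 1) * ((t : ℂ) - (L : ℂ))) := by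
    rw [cpow_eq_cexp (div_pos hE hD), Real.log_div hE.ne' hD.ne', hEdef, Real.log_exp]
    push_cast; ring_nf
    rfl
  have h3 : (((1 + E)⁻¹ : ℝ) : ℂ) ^ (1 + p - 1)
      = Complex.exp ((1 + p - 1) * (-(L : ℂ))) := by
    rw [cpow_eq_cexp (inv_pos.mpr hD), Real.log_inv]
    push_cast; ring_nf
    rfl
  have h4 : ((E / (1 + E) ^ 2 : ℝ) : ℂ) = Complex.exp ((t : ℂ) - 2 * L) := by
    have : E / (1 + E) ^ 2 = Real.exp (t - 2 * L) := by
      rw [Real.exp_sub, hEdef]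
      congr 1
      rw [show (2 : ℝ) * L = L + L by ring, Real.exp_add, Real.exp_log hD, sq]
    rw [this, Complex.ofReal_exp]
    push_cast; ring_nf
  have h5 : ((E : ℝ) : ℂ) + 1 = Complex.exp ((L : ℂ)) := by
    rw [← Complex.ofReal_exp, Real.exp_log hD]
    push_cast; ring
  rw [Complex.real_smul, h1, h2, h3, h4, show (Real.exp t : ℂ) + 1 = ((E:ℝ):ℂ) + 1 from rfl,
    h5, ← Complex.exp_add, ← Complex.exp_add, ← Complex.exp_sub]
  congr 1
  ring

/-- Two-sided Laplace transform of `1/(eᵗ+1)` on the strip `−1 < Re p < 0`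
(paper's Example 3.15.3). -/
theorem two_sided_laplace_fermi (p : ℂ) (h₀ : -1 < p.re) (h₁ : p.re < 0) :
    Integrable (fun t : ℝ => Complex.exp (-(p * t)) / (Real.exp t + 1)) ∧
    (∫ t : ℝ, Complex.exp (-(p * t)) / (Real.exp t + 1)) =
      -(Real.pi : ℂ) / Complex.sin (Real.pi * p) := by
  have hu : 0 < (-p).re := by simp [h₁]
  have hv : 0 < (1 + p).re := by simp; linarith
  set g : ℝ → ℂ := fun x => (x : ℂ) ^ (-p - 1) * (1 - (x : ℂ)) ^ (1 + p - 1) with hg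
  set f : ℝ → ℝ := fun t => Real.exp t / (1 + Real.exp t) with hf
  set f' : ℝ → ℝ := fun t => Real.exp t / (1 + Real.exp t) ^ 2 with hf'
  have hderiv : ∀ t ∈ (univ : Set ℝ), HasDerivWithinAt f (f' t) univ t := by
    intro t _
    have hE : 0 < Real.exp t := Real.exp_pos t
    have hD : (0:ℝ) < 1 + Real.exp t := by linarith
    have h := (Real.hasDerivAt_exp t).div ((Real.hasDerivAt_exp t).const_add 1) hD.ne'
    have : Real.exp t * (1 + Real.exp t) - Real.exp t * Real.exp t = Real.exp t := by ring
    rw [this] at h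
    exact h.hasDerivWithinAt
  have hinj : InjOn f univ := by
    intro a _ b _ hab
    have hA : (0:ℝ) < 1 + Real.exp a := by positivity
    have hB : (0:ℝ) < 1 + Real.exp b := by positivity
    have : Real.exp a = Real.exp b := by
      simp only [hf] at hab
      field_simp at hab
      linarith
    exact Real.exp_injective this
  have himg : f '' univ = Ioo (0:ℝ) 1 := by
    rw [image_univ]
    ext y
    constructor
    · rintro ⟨t, rfl⟩
      have hE : 0 < Real.exp t := Real.exp_pos t
      have hD : (0:ℝ) < 1 + Real.exp t := by linarith
      constructor
      · exact div_pos hE hD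
      · rw [div_lt_one hD]; linarith
    · rintro ⟨hy0, hy1⟩
      refine ⟨Real.log (y / (1 - y)), ?_⟩
      have h1y : (0:ℝ) < 1 - y := by linarith
      simp only [hf, Real.exp_log (div_pos hy0 h1y)]
      field_simp
      ring
  have hbeta : IntegrableOn g (Ioo (0:ℝ) 1) := by
    have := Complex.betaIntegral_convergent hu hv
    have h2 : IntegrableOn (fun x : ℝ => (x:ℂ) ^ (-p - 1) * (1 - (x:ℂ)) ^ (1 + p - 1))
        (Ioc (0:ℝ) 1) := by
      have h3 := this.1
      simpa [intervalIntegrable_iff, uIoc_of_le (zero_le_one)] using this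
    exact h2.mono_set Ioo_subset_Ioc_self
  have hint : Integrable (fun t : ℝ => Complex.exp (-(p * t)) / (Real.exp t + 1)) := by
    rw [← integrableOn_univ]
    have := (integrableOn_image_iff_integrableOn_abs_deriv_smul
      MeasurableSet.univ hderiv hinj g).mp (by rwa [himg])
    refine this.congr_fun ?_ MeasurableSet.univ
    intro t _
    have hE : 0 < Real.exp t := Real.exp_pos t
    have habs : |f' t| = f' t := abs_of_pos (div_pos hE (by positivity))
    show |f' t| • g (f t) = Complex.exp (-(p * t)) / (Real.exp t + 1)
    rw [habs]
    exact fermi_key p t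
  refine ⟨hint, ?_⟩
  have hchg : (∫ t : ℝ, Complex.exp (-(p * t)) / (Real.exp t + 1))
      = ∫ x in Ioo (0:ℝ) 1, g x := by
    rw [← setIntegral_univ, ← himg,
      integral_image_eq_integral_abs_deriv_smul MeasurableSet.univ hderiv hinj g]
    refine setIntegral_congr_fun MeasurableSet.univ ?_
    intro t _
    have hE : 0 < Real.exp t := Real.exp_pos t
    have habs : |f' t| = f' t := abs_of_pos (div_pos hE (by positivity))
    show Complex.exp (-(p * t)) / (Real.exp t + 1) = |f' t| • g (f t)
    rw [habs]
    exact (fermi_key p t).symm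
  have hbeta_eq : (∫ x in Ioo (0:ℝ) 1, g x) = Complex.betaIntegral (-p) (1 + p) := by
    rw [← integral_Ioc_eq_integral_Ioo, Complex.betaIntegral,
      intervalIntegral.integral_of_le zero_le_one]
  have hgamma : Complex.Gamma (-p) * Complex.Gamma (1 + p)
      = Complex.betaIntegral (-p) (1 + p) := by
    have := Complex.Gamma_mul_Gamma_eq_betaIntegral hu hv
    rwa [show -p + (1 + p) = 1 by ring, Complex.Gamma_one, one_mul] at this
  have hrefl : Complex.Gamma (-p) * Complex.Gamma (1 + p)
      = -(Real.pi : ℂ) / Complex.sin (Real.pi * p) := by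
    have := Complex.Gamma_mul_Gamma_one_sub (-p)
    rw [show (1 : ℂ) - -p = 1 + p by ring] at this
    rw [this, show (Real.pi : ℂ) * -p = -(Real.pi * p) by ring, Complex.sin_neg,
      div_neg, neg_div]
  rw [hchg, hbeta_eq, ← hgamma, hrefl]
end

section
/- For every z ∈ ℂ with Re z > 0 and z ≠ 1: ζ(z) = z·∫_1^∞ (⌊x⌋ − x + 1/2)·x^{−z−1} dx + 1/(z−1) + 1/2, where the integral over [1,∞) is absolutely convergent. (Formula (2) of the paper's Example 3.26.1, giving the analytic continuation of ζ to Re z > 0.) -/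
open MeasureTheory Set Complex

namespace ZetaReprAux

open Filter Topology

noncomputable def g (z : ℂ) (x : ℝ) : ℂ :=
  (((⌊x⌋ : ℤ) - x + 1 / 2 : ℝ) : ℂ) * (x : ℂ) ^ (-z - 1)

noncomputable def f0 (x : ℝ) : ℂ :=
  if 1 < x then (((⌊x⌋ : ℤ) - x + 1 / 2 : ℝ) : ℂ) else 0

lemma f0_norm_le (x : ℝ) : ‖f0 x‖ ≤ 1 / 2 := by
  unfold f0
  split_ifs with h
  · rw [Complex.norm_real, Real.norm_eq_abs, abs_le]
    have h1 := Int.floor_le x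
    have h2 := Int.lt_floor_add_one x
    constructor <;> linarith
  · simp

lemma f0_meas : Measurable f0 := by
  apply Measurable.ite measurableSet_Ioi _ measurable_const
  exact Complex.measurable_ofReal.comp
    (((measurable_from_top.comp Int.measurable_floor).sub measurable_id).add measurable_const)

lemma cpow_cont (w : ℂ) : ContinuousOn (fun x : ℝ => (x : ℂ) ^ w) (Ioi 0) := fun x hx =>
  (continuousAt_ofReal_cpow_const x w (Or.inr (ne_of_gt hx))).continuousWithinAt

lemma g_aesm (z : ℂ) {s : Set ℝ} (hs : MeasurableSet s) (hsub : s ⊆ Ioi 0) :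
    AEStronglyMeasurable (g z) (volume.restrict s) := by
  apply AEStronglyMeasurable.mul
  · exact (Complex.measurable_ofReal.comp
      (((measurable_from_top.comp Int.measurable_floor).sub measurable_id).add
        measurable_const)).aestronglyMeasurable
  · exact (((cpow_cont (-z - 1)).mono hsub).aestronglyMeasurable hs)

lemma integrableOn_g {z : ℂ} (hz : 0 < z.re) : IntegrableOn (g z) (Ioi 1) := by
  have hmaj : IntegrableOn (fun x : ℝ => (1 / 2 : ℝ) * x ^ (-z.re - 1)) (Ioi 1) :=
    (integrableOn_Ioi_rpow_of_lt (by linarith) one_pos).const_mul _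
  apply Integrable.mono' hmaj (g_aesm z measurableSet_Ioi (fun x hx => mem_Ioi.mpr (lt_trans one_pos (mem_Ioi.mp hx))))
  filter_upwards [ae_restrict_mem measurableSet_Ioi] with x hx
  have hx0 : (0 : ℝ) < x := lt_trans one_pos hx
  rw [g, norm_mul, Complex.norm_real,
    Complex.norm_cpow_eq_rpow_re_of_pos hx0]
  have h1 := Int.floor_le x
  have h2 := Int.lt_floor_add_one x
  have : |(↑⌊x⌋ - x + 1 / 2 : ℝ)| ≤ 1 / 2 := by rw [abs_le]; constructor <;> linarith
  have hre : (-z - 1).re = -z.re - 1 := by simp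
  rw [Real.norm_eq_abs, hre]
  gcongr

lemma mellin_eq (z : ℂ) : mellin f0 (-z) = ∫ x in Ioi (1 : ℝ), g z x := by
  rw [mellin]
  have h1 : ∀ x ∈ Ioi (0 : ℝ), (x : ℂ) ^ (-z - 1) • f0 x = (Ioi 1).indicator (g z) x := by
    intro x hx
    by_cases h : (1 : ℝ) < x
    · rw [Set.indicator_of_mem (mem_Ioi.mpr h)]
      simp only [f0, g, if_pos h, smul_eq_mul]
      ring
    · simp only [f0, if_neg h, smul_zero,
        indicator_of_notMem (fun hx' => h hx' : x ∉ Ioi 1)]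
  rw [show -z - 1 = -z - 1 from rfl]
  calc ∫ x in Ioi (0:ℝ), (x : ℂ) ^ (-z - 1) • f0 x
      = ∫ x in Ioi (0:ℝ), (Ioi 1).indicator (g z) x :=
        setIntegral_congr_fun measurableSet_Ioi h1
    _ = ∫ x in Ioi (0:ℝ) ∩ Ioi 1, g z x := setIntegral_indicator measurableSet_Ioi
    _ = ∫ x in Ioi (1:ℝ), g z x := by rw [Ioi_inter_Ioi]; norm_num

lemma locInt_f0 : LocallyIntegrableOn f0 (Ioi 0) := by
  rw [locallyIntegrableOn_iff isOpen_Ioi.isLocallyClosed]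
  intro k hk hkc
  exact Measure.integrableOn_of_bounded hkc.measure_lt_top.ne
    f0_meas.aestronglyMeasurable (ae_of_all _ f0_norm_le)

lemma mellin_diff {z : ℂ} (hz : 0 < z.re) :
    DifferentiableAt ℂ (fun w => mellin f0 (-w)) z := by
  have h : DifferentiableAt ℂ (mellin f0) (-z) := by
    apply mellin_differentiableAt_of_isBigO_rpow (a := 0) (b := -z.re - 1) locInt_f0
    · apply Asymptotics.IsBigO.of_bound (1 / 2)
      filter_upwards [eventually_ge_atTop (1 : ℝ)] with x hx
      rw [neg_zero, Real.rpow_zero, norm_one, mul_one]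
      exact f0_norm_le x
    · simpa using hz
    · have he : f0 =ᶠ[nhdsWithin 0 (Ioi 0)] (fun _ => (0 : ℂ)) := by
        filter_upwards [Ioo_mem_nhdsGT_of_mem (by norm_num : (0:ℝ) ∈ Ico 0 1)] with x hx
        simp [f0, not_lt.mpr hx.2.le]
      exact he.trans_isBigO (Asymptotics.isBigO_zero _ _)
    · simp only [neg_re]; linarith
  exact h.comp z (differentiable_neg z)

lemma tendsto_cpow_zero {w : ℂ} (hw : w.re < 0) :
    Filter.Tendsto (fun N : ℕ => ((N : ℂ) + 1) ^ w) atTop (𝓝 0) := by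
  rw [tendsto_zero_iff_norm_tendsto_zero]
  have h : ∀ N : ℕ, ‖((N : ℂ) + 1) ^ w‖ = ((N : ℝ) + 1) ^ w.re := by
    intro N
    rw [show ((N : ℂ) + 1) = (((N : ℝ) + 1 : ℝ) : ℂ) by push_cast; ring,
      Complex.norm_cpow_eq_rpow_re_of_pos (by positivity)]
  simp only [h]
  have h2 := (tendsto_rpow_neg_atTop (by linarith : (0:ℝ) < -w.re)).comp
    (tendsto_atTop_add_const_right atTop (1 : ℝ) tendsto_natCast_atTop_atTop)
  simpa [Function.comp_def] using h2

lemma intInt {z : ℂ} (hz : 0 < z.re) {a b : ℝ} (ha : 1 ≤ a) (hab : a ≤ b) :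
    IntervalIntegrable (g z) volume a b := by
  rw [intervalIntegrable_iff_integrableOn_Ioc_of_le hab]
  exact (integrableOn_g hz).mono_set (fun x hx => lt_of_le_of_lt ha hx.1)

lemma cpow_intInt (w : ℂ) {a b : ℝ} (ha : 0 < a) (hab : a ≤ b) :
    IntervalIntegrable (fun x : ℝ => (x : ℂ) ^ w) volume a b := by
  apply ContinuousOn.intervalIntegrable
  apply (cpow_cont w).mono
  rw [uIcc_of_le hab]
  intro x hx
  exact lt_of_lt_of_le ha hx.1

lemma integral_step {z : ℂ} (hz0 : z ≠ 0) (hz1 : z ≠ 1) (N : ℕ) :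
    ∫ x in ((N : ℝ) + 1)..((N : ℝ) + 2), g z x
      = ((N : ℂ) + 1 + 1 / 2) *
          ((((N : ℝ) + 2 : ℝ) : ℂ) ^ (-z) - (((N : ℝ) + 1 : ℝ) : ℂ) ^ (-z)) / (-z)
        - ((((N : ℝ) + 2 : ℝ) : ℂ) ^ (1 - z) - (((N : ℝ) + 1 : ℝ) : ℂ) ^ (1 - z)) / (1 - z) := by
  have hle : (N : ℝ) + 1 ≤ (N : ℝ) + 2 := by linarith
  have hcongr : ∀ x ∈ Ioo ((N : ℝ) + 1) ((N : ℝ) + 2),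
      g z x = ((N : ℂ) + 1 + 1 / 2) * (x : ℂ) ^ (-z - 1) - (x : ℂ) ^ (-z) := by
    intro x hx
    have hx0 : (0 : ℝ) < x := lt_trans (by positivity) hx.1
    have hxne : (x : ℂ) ≠ 0 := ofReal_ne_zero.mpr (ne_of_gt hx0)
    have hfloor : ⌊x⌋ = (N : ℤ) + 1 := by
      rw [Int.floor_eq_iff]
      constructor
      · push_cast; linarith [hx.1]
      · push_cast; linarith [hx.2]
    have hxpow : (x : ℂ) ^ (-z) = (x : ℂ) * (x : ℂ) ^ (-z - 1) := by
      conv_lhs => rw [show -z = 1 + (-z - 1) by ring]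
      rw [cpow_add _ _ hxne, cpow_one]
    rw [g, hfloor, hxpow]
    push_cast
    ring
  have hrw : ∫ x in ((N : ℝ) + 1)..((N : ℝ) + 2), g z x
      = ∫ x in ((N : ℝ) + 1)..((N : ℝ) + 2),
          (((N : ℂ) + 1 + 1 / 2) * (x : ℂ) ^ (-z - 1) - (x : ℂ) ^ (-z)) := by
    rw [intervalIntegral.integral_of_le hle, intervalIntegral.integral_of_le hle,
      MeasureTheory.integral_Ioc_eq_integral_Ioo, MeasureTheory.integral_Ioc_eq_integral_Ioo]
    exact setIntegral_congr_fun measurableSet_Ioo hcongr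
  have h0 : (0 : ℝ) < (N : ℝ) + 1 := by positivity
  have hz1' : -z ≠ -1 := fun h => hz1 (neg_inj.mp h)
  have hz0' : -z - 1 ≠ -1 := fun h => hz0 (by linear_combination -h)
  rw [hrw, intervalIntegral.integral_sub
      ((cpow_intInt (-z - 1) h0 hle).const_mul _) (cpow_intInt (-z) h0 hle),
    intervalIntegral.integral_const_mul,
    integral_cpow (Or.inr ⟨hz0', fun h => absurd ((uIcc_of_le hle ▸ h).1) (by linarith)⟩),
    integral_cpow (Or.inr ⟨hz1', fun h => absurd ((uIcc_of_le hle ▸ h).1) (by linarith)⟩)]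
  rw [show -z - 1 + 1 = -z by ring, show -z + 1 = 1 - z by ring]
  ring

noncomputable def E (z : ℂ) (N : ℕ) : ℂ :=
  (∑ k ∈ Finset.range (N + 1), ((k : ℂ) + 1) ^ (-z)) / z - ((N : ℂ) + 1) ^ (1 - z) / z
    - (1 - ((N : ℂ) + 1) ^ (1 - z)) / (z - 1) + (1 - ((N : ℂ) + 1) ^ (-z)) / (2 * z)

lemma closed_form {z : ℂ} (hz : 1 < z.re) (N : ℕ) :
    ∫ x in (1 : ℝ)..((N : ℝ) + 1), g z x = E z N := by
  have hz0 : z ≠ 0 := fun h => by rw [h] at hz; norm_num at hz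
  have hz1 : z ≠ 1 := fun h => by rw [h] at hz; norm_num at hz
  have hzpos : 0 < z.re := by linarith
  induction N with
  | zero =>
    norm_num [E, one_cpow]
  | succ n ih =>
    have hadj : ∫ x in (1 : ℝ)..((n : ℝ) + 2), g z x
        = (∫ x in (1 : ℝ)..((n : ℝ) + 1), g z x)
          + ∫ x in ((n : ℝ) + 1)..((n : ℝ) + 2), g z x :=
      (intervalIntegral.integral_add_adjacent_intervals
        (intInt hzpos le_rfl (by linarith [n.cast_nonneg (α := ℝ)]))
        (intInt hzpos (by linarith [n.cast_nonneg (α := ℝ)]) (by linarith))).symm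
    have hcast : ((n : ℝ) + 1 + 1 : ℝ) = (n : ℝ) + 2 := by ring
    rw [show (((n : ℕ) + 1 : ℕ) : ℝ) + 1 = (n : ℝ) + 2 by push_cast; ring, hadj, ih,
      integral_step hz0 hz1 n]
    -- now pure algebra
    have hne1 : ((n : ℂ) + 1) ≠ 0 := by
      intro h
      have := congrArg Complex.re h
      simp at this
      linarith [n.cast_nonneg (α := ℝ)]
    have hne2 : ((n : ℂ) + 2) ≠ 0 := by
      intro h
      have := congrArg Complex.re h
      simp at this
      linarith [n.cast_nonneg (α := ℝ)]
    have e1 : ((n : ℂ) + 1) ^ (1 - z) = ((n : ℂ) + 1) * ((n : ℂ) + 1) ^ (-z) := by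
      conv_lhs => rw [show (1 : ℂ) - z = 1 + (-z) by ring]
      rw [cpow_add _ _ hne1, cpow_one]
    have e2 : ((n : ℂ) + 2) ^ (1 - z) = ((n : ℂ) + 2) * ((n : ℂ) + 2) ^ (-z) := by
      conv_lhs => rw [show (1 : ℂ) - z = 1 + (-z) by ring]
      rw [cpow_add _ _ hne2, cpow_one]
    have hsum : ∑ k ∈ Finset.range (n + 1 + 1), ((k : ℂ) + 1) ^ (-z)
        = (∑ k ∈ Finset.range (n + 1), ((k : ℂ) + 1) ^ (-z)) + ((n : ℂ) + 2) ^ (-z) := by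
      rw [Finset.sum_range_succ]
      congr 2
      push_cast
      ring
    unfold E
    rw [hsum]
    push_cast
    rw [show ((n : ℂ) + 1 + 1) = (n : ℂ) + 2 by ring]
    rw [e1, e2]
    have hz1' : z - 1 ≠ 0 := sub_ne_zero.mpr hz1
    have hz1'' : 1 - z ≠ 0 := fun h => hz1' (by linear_combination -h)
    field_simp
    ring

lemma tendsto_E {z : ℂ} (hz : 1 < z.re) :
    Filter.Tendsto (E z) atTop
      (𝓝 (riemannZeta z / z - 1 / (z - 1) + 1 / (2 * z))) := by
  have hsum : Filter.Tendsto
      (fun N : ℕ => ∑ k ∈ Finset.range (N + 1), ((k : ℂ) + 1) ^ (-z)) atTop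
      (𝓝 (riemannZeta z)) := by
    have hs0 : Summable (fun n : ℕ => 1 / (n : ℂ) ^ z) :=
      Complex.summable_one_div_nat_cpow.mpr hz
    have hs : Summable (fun n : ℕ => ((n : ℂ) + 1) ^ (-z)) := by
      have := (summable_nat_add_iff 1).mpr hs0
      apply this.congr
      intro n
      rw [cpow_neg, one_div]
      push_cast
      ring_nf
    have hζ : riemannZeta z = ∑' n : ℕ, ((n : ℂ) + 1) ^ (-z) := by
      rw [zeta_eq_tsum_one_div_nat_add_one_cpow hz]
      congr 1
      ext n
      rw [cpow_neg, one_div]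
    rw [hζ]
    exact hs.hasSum.tendsto_sum_nat.comp (tendsto_add_atTop_nat 1)
  have h1 : ((1 : ℂ) - z).re < 0 := by simp; linarith
  have h2 : (-z).re < 0 := by simp; linarith
  have t1 := tendsto_cpow_zero h1
  have t2 := tendsto_cpow_zero h2
  have tA := (hsum.div_const z).sub (t1.div_const z)
  have tB := ((tendsto_const_nhds (x := (1 : ℂ))).sub t1).div_const (z - 1)
  have tC := ((tendsto_const_nhds (x := (1 : ℂ))).sub t2).div_const (2 * z)
  have tAll := (tA.sub tB).add tC
  show Filter.Tendsto (fun N => E z N) _ _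
  simpa [E] using tAll

lemma key {z : ℂ} (hz : 1 < z.re) :
    riemannZeta z = z * (∫ x in Ioi (1 : ℝ), g z x) + 1 / (z - 1) + 1 / 2 := by
  have hz0 : z ≠ 0 := fun h => by rw [h] at hz; norm_num at hz
  have hz1 : z - 1 ≠ 0 := sub_ne_zero.mpr (fun h => by rw [h] at hz; norm_num at hz)
  have hI := integrableOn_g (by linarith : 0 < z.re)
  have ht : Filter.Tendsto (fun N : ℕ => ∫ x in (1 : ℝ)..((N : ℝ) + 1), g z x) atTop
      (𝓝 (∫ x in Ioi (1 : ℝ), g z x)) :=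
    intervalIntegral_tendsto_integral_Ioi 1 hI
      (tendsto_atTop_add_const_right atTop 1 tendsto_natCast_atTop_atTop)
  simp only [closed_form hz] at ht
  have heq : ∫ x in Ioi (1 : ℝ), g z x
      = riemannZeta z / z - 1 / (z - 1) + 1 / (2 * z) :=
    tendsto_nhds_unique ht (tendsto_E hz)
  rw [heq]
  have e : z * (riemannZeta z / z - 1 / (z - 1) + 1 / (2 * z))
      = riemannZeta z - z / (z - 1) + 1 / 2 := by
    field_simp
  have e2 : z / (z - 1) = 1 + 1 / (z - 1) := by
    field_simp
    ring
  rw [e, e2]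
  ring

def U' : Set ℂ := {z : ℂ | 0 < z.re} \ {1}

lemma isOpen_U' : IsOpen U' :=
  (isOpen_lt continuous_const Complex.continuous_re).sdiff isClosed_singleton

lemma preconnected_U' : IsPreconnected U' := by
  have c1 : Convex ℝ ({z : ℂ | 0 < z.re} ∩ {z : ℂ | z.re < 1}) :=
    (convex_halfSpace_re_gt 0).inter (convex_halfSpace_re_lt 1)
  have c2 : Convex ℝ {z : ℂ | 1 < z.re} := convex_halfSpace_re_gt 1
  have c3 : Convex ℝ ({z : ℂ | 0 < z.re} ∩ {z : ℂ | 0 < z.im}) :=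
    (convex_halfSpace_re_gt 0).inter (convex_halfSpace_im_gt 0)
  have c4 : Convex ℝ ({z : ℂ | 0 < z.re} ∩ {z : ℂ | z.im < 0}) :=
    (convex_halfSpace_re_gt 0).inter (convex_halfSpace_im_lt 0)
  have hU : U' = ((({z : ℂ | 0 < z.re} ∩ {z : ℂ | z.re < 1}) ∪
      ({z : ℂ | 0 < z.re} ∩ {z : ℂ | 0 < z.im})) ∪ {z : ℂ | 1 < z.re}) ∪
      ({z : ℂ | 0 < z.re} ∩ {z : ℂ | z.im < 0}) := by
    ext w
    simp only [U', mem_diff, mem_singleton_iff, mem_union, mem_inter_iff, mem_setOf_eq,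
      Complex.ext_iff, Complex.one_re, Complex.one_im]
    constructor
    · rintro ⟨hre, hne⟩
      rcases lt_trichotomy w.re 1 with h | h | h
      · exact Or.inl (Or.inl (Or.inl ⟨hre, h⟩))
      · rcases lt_trichotomy w.im 0 with h' | h' | h'
        · exact Or.inr ⟨hre, h'⟩
        · exact absurd ⟨h, h'⟩ hne
        · exact Or.inl (Or.inl (Or.inr ⟨hre, h'⟩))
      · exact Or.inl (Or.inr h)
    · rintro (((⟨h1, h2⟩ | ⟨h1, h2⟩) | h) | ⟨h1, h2⟩)
      · exact ⟨h1, fun he => absurd he.1 (ne_of_lt h2)⟩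
      · exact ⟨h1, fun he => absurd he.2 (ne_of_gt h2)⟩
      · exact ⟨lt_trans one_pos h, fun he => absurd he.1 (ne_of_gt h)⟩
      · exact ⟨h1, fun he => absurd he.2 (ne_of_lt h2)⟩
  rw [hU]
  have p1 : IsPreconnected (({z : ℂ | 0 < z.re} ∩ {z : ℂ | z.re < 1}) ∪
      ({z : ℂ | 0 < z.re} ∩ {z : ℂ | 0 < z.im})) := by
    apply IsPreconnected.union (1 / 2 + (1 / 2) * Complex.I)
    · constructor <;> simp <;> norm_num
    · constructor <;> simp <;> norm_num
    · exact c1.isPreconnected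
    · exact c3.isPreconnected
  have p2 : IsPreconnected ((({z : ℂ | 0 < z.re} ∩ {z : ℂ | z.re < 1}) ∪
      ({z : ℂ | 0 < z.re} ∩ {z : ℂ | 0 < z.im})) ∪ {z : ℂ | 1 < z.re}) := by
    apply IsPreconnected.union (2 + Complex.I)
    · apply mem_union_right
      constructor <;> simp <;> norm_num
    · simp
    · exact p1
    · exact c2.isPreconnected
  apply IsPreconnected.union (1 / 2 + (-1 / 2) * Complex.I)
  · apply mem_union_left
    apply mem_union_left
    constructor <;> simp <;> norm_num
  · constructor <;> simp <;> norm_num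
  · exact p2
  · exact c4.isPreconnected

lemma eqOn_U' : EqOn riemannZeta
    (fun w => w * mellin f0 (-w) + 1 / (w - 1) + 1 / 2) U' := by
  apply AnalyticOnNhd.eqOn_of_preconnected_of_eventuallyEq (𝕜 := ℂ) (z₀ := (2 : ℂ))
    ?_ ?_ preconnected_U' ?_ ?_
  · apply DifferentiableOn.analyticOnNhd _ isOpen_U'
    intro w hw
    exact (differentiableAt_riemannZeta (by
      simpa using (hw.2 : w ∉ ({1} : Set ℂ)))).differentiableWithinAt
  · apply DifferentiableOn.analyticOnNhd _ isOpen_U'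
    intro w hw
    have h1 : DifferentiableAt ℂ (fun w : ℂ => w * mellin f0 (-w)) w :=
      differentiableAt_fun_id.mul (mellin_diff hw.1)
    have h2 : DifferentiableAt ℂ (fun w : ℂ => 1 / (w - 1)) w := by
      apply DifferentiableAt.div (differentiableAt_const 1)
        (differentiableAt_fun_id.sub (differentiableAt_const 1))
      exact sub_ne_zero.mpr (by simpa using (hw.2 : w ∉ ({1} : Set ℂ)))
    exact ((h1.add h2).add (differentiableAt_const _)).differentiableWithinAt
  · refine ⟨by norm_num, by simp⟩
  · have hmem : {w : ℂ | 1 < w.re} ∈ 𝓝 (2 : ℂ) := by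
      apply (isOpen_lt continuous_const Complex.continuous_re).mem_nhds
      norm_num
    filter_upwards [hmem] with w hw
    rw [key hw, mellin_eq]

end ZetaReprAux

/-- Analytic continuation of `ζ` to `Re z > 0`
(Formula (2) of the paper's Example 3.26.1). -/
theorem zeta_integral_repr_re_pos (z : ℂ) (hz : 0 < z.re) (hz1 : z ≠ 1) :
    IntegrableOn
      (fun x : ℝ => (((⌊x⌋ : ℤ) - x + 1 / 2 : ℝ) : ℂ) * (x : ℂ) ^ (-z - 1))
      (Ioi 1) ∧
    riemannZeta z =
      z * (∫ x in Ioi (1 : ℝ), (((⌊x⌋ : ℤ) - x + 1 / 2 : ℝ) : ℂ) * (x : ℂ) ^ (-z - 1))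
        + 1 / (z - 1) + 1 / 2 := by
  constructor
  · exact ZetaReprAux.integrableOn_g hz
  · have h := ZetaReprAux.eqOn_U' (show z ∈ ZetaReprAux.U' from ⟨hz, by simp [hz1]⟩)
    simp only [ZetaReprAux.mellin_eq, ZetaReprAux.g] at h
    exact h
end

section
/- Let ψ(x) := Σ_{n=1}^{∞} exp(−n²·π·x) for x > 0. For every q ∈ ℂ with −1/2 < Re q < 1/2: π^{−q/2−1/4}·Γ(q/2 + 1/4)·ζ(q + 1/2) = ∫_{−∞}^{∞} (−exp(−|t|/2) + 2·exp(|t|/2)·ψ(exp(2|t|)))·exp(−t·q) dt, the integral being absolutely convergent on this strip. (Formula (7) of the paper's Example 3.26.3, the two-sided Laplace representation of the completed zeta function centred at the critical line.) -/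
open MeasureTheory Set Complex

/-- The Jacobi theta-type series `ψ(x) = Σ_{n≥1} exp(−n²πx)`. -/
noncomputable def jacobiPsi (x : ℝ) : ℝ :=
  ∑' n : ℕ, Real.exp (-((n : ℝ) + 1) ^ 2 * Real.pi * x)

section CompletedZetaAuxHelpers
open HurwitzZeta Filter Topology


lemma cpow_rexp (a : ℝ) (w : ℂ) : (Real.exp a : ℂ) ^ w = Complex.exp (w * a) := by
  rw [Complex.ofReal_exp, Complex.cpow_def_of_ne_zero (Complex.exp_ne_zero _),
    Complex.log_exp (by simpa using Real.pi_pos) (by simpa using Real.pi_pos.le), mul_comm]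

lemma rexp_rpow (a b : ℝ) : (Real.exp a) ^ b = Real.exp (a * b) := by
  rw [Real.rpow_def_of_pos (Real.exp_pos a), Real.log_exp]

lemma hasSum_psi {x : ℝ} (hx : 0 < x) :
    HasSum (fun n : ℕ => 2 * Real.exp (-Real.pi * ((n : ℝ) + 1) ^ 2 * x))
      (evenKernel 0 x - 1) := by
  have h := hasSum_int_evenKernel₀ (0 : ℝ) hx
  simp only [add_zero, QuotientAddGroup.mk_zero, if_pos rfl, eq_self_iff_true, if_true] at h
  have h2 := h.nat_add_neg
  simp only [Int.cast_natCast, Int.cast_neg, neg_eq_zero, neg_sq, Int.cast_zero, if_pos rfl, eq_self_iff_true, if_true,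
    add_zero] at h2
  have h3 : HasSum (fun n : ℕ =>
      (fun m : ℕ => if (m : ℝ) = 0 then (0:ℝ) else 2 * Real.exp (-Real.pi * (m:ℝ) ^ 2 * x)) (n + 1))
      ((evenKernel 0 x - 1) - ∑ i ∈ Finset.range 1,
        (if (i : ℝ) = 0 then (0:ℝ) else 2 * Real.exp (-Real.pi * (i:ℝ) ^ 2 * x))) := by
    refine (hasSum_nat_add_iff' 1).mpr ?_
    refine h2.congr_fun fun n => ?_
    by_cases hn : (n : ℝ) = 0 <;> simp [hn] <;> ring
  simp only [Finset.sum_range_one, Nat.cast_zero, if_pos rfl, eq_self_iff_true, if_true, sub_zero] at h3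
  refine h3.congr_fun fun n => ?_
  have : ((n : ℝ) + 1) ≠ 0 := by positivity
  simp only [Nat.cast_add, Nat.cast_one, if_neg this]

lemma evenKernel_zero_eq {x : ℝ} (hx : 0 < x) :
    evenKernel 0 x = 1 + 2 * jacobiPsi x := by
  have h := (hasSum_psi hx).div_const 2
  have h2 : jacobiPsi x = (evenKernel 0 x - 1) / 2 := by
    rw [jacobiPsi]
    refine HasSum.tsum_eq ?_
    refine h.congr_fun fun n => ?_
    rw [mul_div_assoc]  -- 2 * e / 2
    ring_nf
  rw [h2]; ring
lemma integrableOn_cexp_neg_mul {c : ℂ} (hc : 0 < c.re) :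
    IntegrableOn (fun t : ℝ => Complex.exp (-(t * c))) (Ioi (0:ℝ)) := by
  refine ((integrable_norm_iff ?_).mp ?_)
  · exact (Complex.continuous_exp.comp
      ((Complex.continuous_ofReal.mul continuous_const).neg)).aestronglyMeasurable
  · refine (exp_neg_integrableOn_Ioi 0 hc).congr_fun (fun t ht => ?_) measurableSet_Ioi
    simp [Complex.norm_exp, Complex.neg_re, Complex.mul_re, mul_comm]

lemma integral_cexp_neg_mul {c : ℂ} (hc : 0 < c.re) :
    ∫ t in Ioi (0:ℝ), Complex.exp (-(t * c)) = 1 / c := by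
  have hc0 : c ≠ 0 := fun h => by simp [h] at hc
  have hderiv : ∀ t ∈ Ioi (0:ℝ),
      HasDerivAt (fun t : ℝ => -Complex.exp (-(t * c)) / c) (Complex.exp (-(t * c))) t := by
    intro t _
    have h1 : HasDerivAt (fun t : ℝ => -((t : ℂ) * c)) (-c) t := by
      exact ((Complex.ofRealCLM.hasDerivAt (x := t)).mul_const c).neg.congr_deriv (by simp)
    have := (h1.cexp).neg.div_const c
    exact this.congr_deriv (by field_simp)
  have htend : Tendsto (fun t : ℝ => -Complex.exp (-(t * c)) / c) atTop (𝓝 0) := by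
    rw [tendsto_zero_iff_norm_tendsto_zero]
    have : (fun t : ℝ => ‖-Complex.exp (-(t * c)) / c‖)
        = fun t : ℝ => Real.exp (-(c.re * t)) / ‖c‖ := by
      ext t
      simp [Complex.norm_exp, Complex.neg_re, Complex.mul_re, mul_comm]
    rw [this]
    have h2 : Tendsto (fun t : ℝ => -(c.re * t)) atTop atBot :=
      tendsto_neg_atBot_iff.mpr (tendsto_id.const_mul_atTop hc)
    simpa using (Real.tendsto_exp_atBot.comp h2).div_const ‖c‖
  have hcont : ContinuousWithinAt (fun t : ℝ => -Complex.exp (-(t * c)) / c) (Ici 0) 0 :=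
    ((Complex.continuous_exp.comp
      ((Complex.continuous_ofReal.mul continuous_const).neg)).neg.div_const c).continuousWithinAt
  have := integral_Ioi_of_hasDerivAt_of_tendsto hcont hderiv (integrableOn_cexp_neg_mul hc) htend
  rw [this]
  simp [neg_div, sub_neg_eq_add, one_div]
lemma image_exp_pos : (fun t : ℝ => Real.exp (2 * t)) '' Ioi 0 = Ioi 1 := by
  ext x
  constructor
  · rintro ⟨t, ht, rfl⟩
    simp only [mem_Ioi] at ht ⊢
    calc (1:ℝ) = Real.exp 0 := Real.exp_zero.symm
    _ < Real.exp (2 * t) := Real.exp_lt_exp.mpr (by linarith)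
  · intro hx
    refine ⟨Real.log x / 2, ?_, ?_⟩
    · have := Real.log_pos hx
      simpa using by positivity
    · show Real.exp (2 * (Real.log x / 2)) = x
      rw [show 2 * (Real.log x / 2) = Real.log x by ring, Real.exp_log (lt_trans one_pos hx)]

lemma image_exp_neg : (fun t : ℝ => Real.exp (-(2 * t))) '' Ioi 0 = Ioo 0 1 := by
  ext x
  constructor
  · rintro ⟨t, ht, rfl⟩
    exact ⟨Real.exp_pos _, Real.exp_lt_one_iff.mpr (by simp at ht ⊢; linarith)⟩
  · rintro ⟨hx0, hx1⟩
    refine ⟨-(Real.log x) / 2, ?_, ?_⟩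
    · have := Real.log_neg hx0 hx1
      simp only [mem_Ioi]
      linarith
    · show Real.exp (-(2 * (-(Real.log x) / 2))) = x
      rw [show -(2 * (-(Real.log x) / 2)) = Real.log x by ring, Real.exp_log hx0]

lemma hasDerivWithinAt_exp_pos (t : ℝ) (s : Set ℝ) :
    HasDerivWithinAt (fun t : ℝ => Real.exp (2 * t)) (2 * Real.exp (2 * t)) s t := by
  have : HasDerivAt (fun t : ℝ => Real.exp (2 * t)) (Real.exp (2 * t) * 2) t :=
    (Real.hasDerivAt_exp _).comp t (by simpa using (hasDerivAt_id t).const_mul 2)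
  exact (by rwa [mul_comm] at this : HasDerivAt _ _ t).hasDerivWithinAt

lemma hasDerivWithinAt_exp_neg (t : ℝ) (s : Set ℝ) :
    HasDerivWithinAt (fun t : ℝ => Real.exp (-(2 * t))) (-2 * Real.exp (-(2 * t))) s t := by
  have : HasDerivAt (fun t : ℝ => Real.exp (-(2 * t))) (Real.exp (-(2 * t)) * (-2)) t :=
    (Real.hasDerivAt_exp _).comp t (((hasDerivAt_id t).const_mul 2).neg.congr_deriv (by ring))
  exact (by rwa [mul_comm] at this : HasDerivAt _ _ t).hasDerivWithinAt

lemma injOn_exp_pos : InjOn (fun t : ℝ => Real.exp (2 * t)) (Ioi 0) :=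
  fun a _ b _ h => by have := Real.exp_injective h; linarith

lemma injOn_exp_neg : InjOn (fun t : ℝ => Real.exp (-(2 * t))) (Ioi 0) :=
  fun a _ b _ h => by have := Real.exp_injective h; linarith

lemma subst_pos (g : ℝ → ℂ) :
    ∫ x in Ioi (1:ℝ), g x
      = ∫ t in Ioi (0:ℝ), (2 * Real.exp (2 * t)) • g (Real.exp (2 * t)) := by
  rw [← image_exp_pos, integral_image_eq_integral_abs_deriv_smul measurableSet_Ioi
    (fun t _ => hasDerivWithinAt_exp_pos t _) injOn_exp_pos g]
  refine setIntegral_congr_fun measurableSet_Ioi fun t _ => ?_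
  rw [abs_of_pos (by positivity)]

lemma subst_pos_int (g : ℝ → ℂ) :
    IntegrableOn g (Ioi (1:ℝ)) ↔
      IntegrableOn (fun t => (2 * Real.exp (2 * t)) • g (Real.exp (2 * t))) (Ioi (0:ℝ)) := by
  rw [← image_exp_pos, integrableOn_image_iff_integrableOn_abs_deriv_smul measurableSet_Ioi
    (fun t _ => hasDerivWithinAt_exp_pos t _) injOn_exp_pos g]
  constructor <;> intro h <;> refine h.congr_fun (fun t _ => ?_) measurableSet_Ioi
  · beta_reduce; rw [abs_of_pos (by positivity)]
  · beta_reduce; rw [abs_of_pos (by positivity)]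

lemma subst_neg (g : ℝ → ℂ) :
    ∫ x in Ioo (0:ℝ) 1, g x
      = ∫ t in Ioi (0:ℝ), (2 * Real.exp (-(2 * t))) • g (Real.exp (-(2 * t))) := by
  rw [← image_exp_neg, integral_image_eq_integral_abs_deriv_smul measurableSet_Ioi
    (fun t _ => hasDerivWithinAt_exp_neg t _) injOn_exp_neg g]
  refine setIntegral_congr_fun measurableSet_Ioi fun t _ => ?_
  rw [show |(-2 : ℝ) * Real.exp (-(2*t))| = 2 * Real.exp (-(2*t)) by
    rw [abs_of_neg (by nlinarith [Real.exp_pos (-(2*t))]), neg_mul, neg_neg]]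

lemma subst_neg_int (g : ℝ → ℂ) :
    IntegrableOn g (Ioo (0:ℝ) 1) ↔
      IntegrableOn (fun t => (2 * Real.exp (-(2 * t))) • g (Real.exp (-(2 * t)))) (Ioi (0:ℝ)) := by
  rw [← image_exp_neg, integrableOn_image_iff_integrableOn_abs_deriv_smul measurableSet_Ioi
    (fun t _ => hasDerivWithinAt_exp_neg t _) injOn_exp_neg g]
  have habs : ∀ t : ℝ, |(-2 : ℝ) * Real.exp (-(2*t))| = 2 * Real.exp (-(2*t)) := fun t => by
    rw [abs_of_neg (by nlinarith [Real.exp_pos (-(2*t))]), neg_mul, neg_neg]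
  constructor <;> intro h <;> refine h.congr_fun (fun t _ => ?_) measurableSet_Ioi
  · beta_reduce; rw [habs]
  · beta_reduce; rw [habs]


lemma f_modif_Ioi {x : ℝ} (hx : 1 < x) :
    (hurwitzEvenFEPair 0).f_modif x = ((evenKernel 0 x : ℂ) - 1) := by
  rw [WeakFEPair.f_modif, Pi.add_apply, indicator_of_mem (mem_Ioi.mpr hx),
    indicator_of_notMem (fun h => absurd h.2 (not_lt.mpr hx.le)), add_zero]
  show (Complex.ofReal ∘ evenKernel 0) x - (if (0 : UnitAddCircle) = 0 then (1:ℂ) else 0) = _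
  rw [if_pos rfl]; rfl

lemma f_modif_Ioo {x : ℝ} (h0 : 0 < x) (h1 : x < 1) :
    (hurwitzEvenFEPair 0).f_modif x
      = ((evenKernel 0 x : ℂ) - ((x ^ (-(1/2) : ℝ) : ℝ) : ℂ)) := by
  rw [WeakFEPair.f_modif, Pi.add_apply, indicator_of_notMem (notMem_Ioi.mpr h1.le),
    indicator_of_mem (mem_Ioo.mpr ⟨h0, h1⟩), zero_add]
  show (Complex.ofReal ∘ evenKernel 0) x - ((1 : ℂ) * ((x ^ (-(1/2:ℝ)) : ℝ) : ℂ)) • (1:ℂ) = _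
  simp [smul_eq_mul]

lemma f_modif_one : (hurwitzEvenFEPair 0).f_modif 1 = 0 := by
  rw [WeakFEPair.f_modif, Pi.add_apply, indicator_of_notMem (by simp),
    indicator_of_notMem (by simp)]
  simp

lemma phi_split (w : ℂ) {x : ℝ} (hx : x ∈ Ioi (0:ℝ)) :
    (x:ℂ) ^ (w-1) • (hurwitzEvenFEPair 0).f_modif x
      = indicator (Ioi 1) (fun x : ℝ => (x:ℂ)^(w-1) * ((evenKernel 0 x : ℂ) - 1)) x
        + indicator (Ioo 0 1)
          (fun x : ℝ => (x:ℂ)^(w-1) * ((evenKernel 0 x : ℂ) - ((x ^ (-(1/2):ℝ) : ℝ) : ℂ))) x := by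
  rcases lt_trichotomy x 1 with h | h | h
  · rw [indicator_of_notMem (notMem_Ioi.mpr h.le), indicator_of_mem (mem_Ioo.mpr ⟨hx, h⟩),
      f_modif_Ioo hx h, zero_add, smul_eq_mul]
  · subst h
    rw [f_modif_one, indicator_of_notMem (by simp), indicator_of_notMem (by simp)]
    simp
  · rw [indicator_of_mem (mem_Ioi.mpr h), indicator_of_notMem (fun hh => absurd hh.2 (not_lt.mpr h.le)),
      f_modif_Ioi h, add_zero, smul_eq_mul]

lemma kernel_reflect (t : ℝ) :
    evenKernel 0 (Real.exp (-(2 * t))) = Real.exp t * evenKernel 0 (Real.exp (2 * t)) := by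
  have h := evenKernel_functional_equation 0 (Real.exp (-(2 * t)))
  rw [← evenKernel_eq_cosKernel_of_zero] at h
  have e1 : (1:ℝ) / Real.exp (-(2*t)) ^ ((1:ℝ)/2) = Real.exp t := by
    rw [rexp_rpow, one_div, ← Real.exp_neg]
    congr 1
    ring
  have e2 : (1:ℝ) / Real.exp (-(2*t)) = Real.exp (2*t) := by
    rw [one_div, ← Real.exp_neg, neg_neg]
  rw [e1, e2] at h
  exact h

lemma comp_pos (q : ℂ) (t : ℝ) :
    ((2 * Real.exp (2 * t)) : ℝ) • ((Real.exp (2 * t) : ℂ) ^ (q/2 + 1/4 - 1)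
        * ((evenKernel 0 (Real.exp (2 * t)) : ℂ) - 1))
      = 2 * (((2 * Real.exp (t / 2) * jacobiPsi (Real.exp (2 * t))) : ℝ) : ℂ)
          * Complex.exp (t * q) := by
  rw [evenKernel_zero_eq (Real.exp_pos _), cpow_rexp]
  have key : Complex.exp ((2 * t : ℝ) : ℂ) * Complex.exp ((q/2 + 1/4 - 1) * ((2 * t : ℝ) : ℂ))
      = Complex.exp ((t / 2 : ℝ) : ℂ) * Complex.exp ((t : ℝ) * q) := by
    rw [← Complex.exp_add, ← Complex.exp_add]
    congr 1
    push_cast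
    ring
  rw [Complex.real_smul]
  push_cast at key ⊢
  linear_combination (4 * (jacobiPsi (Real.exp (2 * t)) : ℂ)) * key

lemma comp_neg (q : ℂ) (t : ℝ) :
    ((2 * Real.exp (-(2 * t))) : ℝ) • ((Real.exp (-(2 * t)) : ℂ) ^ (q/2 + 1/4 - 1)
        * ((evenKernel 0 (Real.exp (-(2 * t))) : ℂ)
            - (((Real.exp (-(2 * t))) ^ (-(1/2):ℝ) : ℝ) : ℂ)))
      = 2 * (((2 * Real.exp (t / 2) * jacobiPsi (Real.exp (2 * t))) : ℝ) : ℂ)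
          * Complex.exp (-(t * q)) := by
  rw [kernel_reflect, evenKernel_zero_eq (Real.exp_pos _), cpow_rexp, rexp_rpow,
    show (-(2*t)) * (-(1/2):ℝ) = t by ring]
  have key : Complex.exp ((-(2 * t) : ℝ) : ℂ) * Complex.exp ((q/2 + 1/4 - 1) * ((-(2 * t) : ℝ) : ℂ))
        * Complex.exp ((t:ℝ):ℂ)
      = Complex.exp ((t / 2 : ℝ) : ℂ) * Complex.exp (-((t : ℝ) * q)) := by
    rw [← Complex.exp_add, ← Complex.exp_add, ← Complex.exp_add]
    congr 1
    push_cast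
    ring
  rw [Complex.real_smul]
  push_cast at key ⊢
  linear_combination (4 * (jacobiPsi (Real.exp (2 * t)) : ℂ)) * key


/-- Two-sided Laplace representation of the completed zeta function centred
at the critical line (Formula (7) of the paper's Example 3.26.3). -/
theorem completed_zeta_two_sided_laplace (q : ℂ)
    (h₀ : -(1 / 2) < q.re) (h₁ : q.re < 1 / 2) :
    Integrable (fun t : ℝ =>
      ((-Real.exp (-|t| / 2)
          + 2 * Real.exp (|t| / 2) * jacobiPsi (Real.exp (2 * |t|)) : ℝ) : ℂ)
        * Complex.exp (-(t * q))) ∧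
    (Real.pi : ℂ) ^ (-q / 2 - 1 / 4) * Complex.Gamma (q / 2 + 1 / 4)
        * riemannZeta (q + 1 / 2) =
      ∫ t : ℝ,
        ((-Real.exp (-|t| / 2)
            + 2 * Real.exp (|t| / 2) * jacobiPsi (Real.exp (2 * |t|)) : ℝ) : ℂ)
          * Complex.exp (-(t * q)) := by
  set F : ℝ → ℂ := fun t : ℝ =>
      ((-Real.exp (-|t| / 2)
          + 2 * Real.exp (|t| / 2) * jacobiPsi (Real.exp (2 * |t|)) : ℝ) : ℂ)
        * Complex.exp (-(t * q)) with hF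
  set Wp : ℝ → ℂ := fun t =>
      ((2 * Real.exp (t / 2) * jacobiPsi (Real.exp (2 * t)) : ℝ) : ℂ)
        * Complex.exp (t * q) with hWp
  set Wm : ℝ → ℂ := fun t =>
      ((2 * Real.exp (t / 2) * jacobiPsi (Real.exp (2 * t)) : ℝ) : ℂ)
        * Complex.exp (-(t * q)) with hWm
  set φ₁ : ℝ → ℂ := fun x => (x:ℂ) ^ (q/2 + 1/4 - 1) * ((evenKernel 0 x : ℂ) - 1) with hφ₁
  set φ₂ : ℝ → ℂ := fun x => (x:ℂ) ^ (q/2 + 1/4 - 1)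
      * ((evenKernel 0 x : ℂ) - ((x ^ (-(1/2):ℝ) : ℝ) : ℂ)) with hφ₂
  have hc₁ : 0 < (q + 1/2 : ℂ).re := by
    have : (q + 1/2 : ℂ).re = q.re + 1/2 := by simp
    rw [this]; linarith
  have hc₂ : 0 < (1/2 - q : ℂ).re := by
    have : (1/2 - q : ℂ).re = 1/2 - q.re := by simp
    rw [this]; linarith
  -- Mellin transform of the modified kernel
  have hM : HasMellin (hurwitzEvenFEPair 0).f_modif (q/2 + 1/4)
      ((hurwitzEvenFEPair 0).Λ₀ (q/2 + 1/4)) :=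
    ⟨((hurwitzEvenFEPair 0).isStrongFEPair_toStrongFEPair.hasMellin _).1, rfl⟩
  obtain ⟨hconv, hval⟩ := hM
  have hint1 : IntegrableOn φ₁ (Ioi 1) := by
    refine ((hconv.mono_set (Ioi_subset_Ioi zero_le_one)).congr_fun
      (fun x hx => ?_) measurableSet_Ioi)
    beta_reduce; rw [smul_eq_mul, f_modif_Ioi hx]
  have hint2 : IntegrableOn φ₂ (Ioo 0 1) := by
    refine ((hconv.mono_set Ioo_subset_Ioi_self).congr_fun
      (fun x hx => ?_) measurableSet_Ioo)
    beta_reduce; rw [smul_eq_mul, f_modif_Ioo hx.1 hx.2]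
  -- split the Mellin integral
  have hIoi0 : (∫ x in Ioi (0:ℝ), (x:ℂ) ^ (q/2 + 1/4 - 1) • (hurwitzEvenFEPair 0).f_modif x)
      = (∫ x in Ioi (1:ℝ), φ₁ x) + ∫ x in Ioo (0:ℝ) 1, φ₂ x := by
    rw [setIntegral_congr_fun measurableSet_Ioi
      (fun x hx => phi_split (q/2 + 1/4) hx :
        EqOn _ (fun x => indicator (Ioi 1) φ₁ x + indicator (Ioo 0 1) φ₂ x) (Ioi 0))]
    have i1 : Integrable (indicator (Ioi 1) φ₁) ((volume : Measure ℝ).restrict (Ioi 0)) := by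
      rw [integrable_indicator_iff measurableSet_Ioi, IntegrableOn,
        Measure.restrict_restrict measurableSet_Ioi]
      exact hint1.mono_set inter_subset_left
    have i2 : Integrable (indicator (Ioo 0 1) φ₂) ((volume : Measure ℝ).restrict (Ioi 0)) := by
      rw [integrable_indicator_iff measurableSet_Ioo, IntegrableOn,
        Measure.restrict_restrict measurableSet_Ioo]
      exact hint2.mono_set inter_subset_left
    rw [integral_add i1 i2, integral_indicator measurableSet_Ioi,
      integral_indicator measurableSet_Ioo, Measure.restrict_restrict measurableSet_Ioi,
      Measure.restrict_restrict measurableSet_Ioo,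
      inter_eq_left.mpr (Ioi_subset_Ioi zero_le_one),
      inter_eq_left.mpr Ioo_subset_Ioi_self]
  -- substitution in the two pieces
  have hsubP : (∫ x in Ioi (1:ℝ), φ₁ x) = 2 * ∫ t in Ioi (0:ℝ), Wp t := by
    rw [subst_pos φ₁, ← integral_const_mul]
    exact setIntegral_congr_fun measurableSet_Ioi
      (fun t _ => (comp_pos q t).trans (mul_assoc _ _ _))
  have hsubN : (∫ x in Ioo (0:ℝ) 1, φ₂ x) = 2 * ∫ t in Ioi (0:ℝ), Wm t := by
    rw [subst_neg φ₂, ← integral_const_mul]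
    exact setIntegral_congr_fun measurableSet_Ioi
      (fun t _ => (comp_neg q t).trans (mul_assoc _ _ _))
  have hWpInt : IntegrableOn Wp (Ioi 0) := by
    have h := ((subst_pos_int φ₁).mp hint1).congr_fun
      (fun t _ => (comp_pos q t).trans (mul_assoc _ _ _)) measurableSet_Ioi
    refine (h.const_mul (2⁻¹ : ℂ)).congr (Filter.Eventually.of_forall fun t => ?_)
    ring
  have hWmInt : IntegrableOn Wm (Ioi 0) := by
    have h := ((subst_neg_int φ₂).mp hint2).congr_fun
      (fun t _ => (comp_neg q t).trans (mul_assoc _ _ _)) measurableSet_Ioi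
    refine (h.const_mul (2⁻¹ : ℂ)).congr (Filter.Eventually.of_forall fun t => ?_)
    ring
  -- pointwise descriptions of F on the two half-lines
  have hFpos : ∀ t ∈ Ioi (0:ℝ), F t = -Complex.exp (-(t * (q + 1/2))) + Wm t := by
    intro t ht
    have habs : |t| = t := abs_of_pos ht
    rw [hF]
    simp only [habs]
    rw [Complex.ofReal_add, add_mul, Complex.ofReal_neg, neg_mul]
    congr 1
    rw [Complex.ofReal_exp, ← Complex.exp_add]
    congr 2
    push_cast
    ring
  have hFneg : ∀ t ∈ Ioi (0:ℝ), F (-t) = -Complex.exp (-(t * (1/2 - q))) + Wp t := by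
    intro t ht
    have habs : |(-t)| = t := by rw [abs_neg, abs_of_pos ht]
    rw [hF]
    simp only [habs]
    rw [Complex.ofReal_add, add_mul, Complex.ofReal_neg, neg_mul]
    congr 1
    · rw [Complex.ofReal_exp, ← Complex.exp_add]
      congr 2
      push_cast
      ring
    · rw [hWp]
      congr 1
      push_cast
      ring
  -- integrability of F
  have hFIoi : IntegrableOn F (Ioi 0) :=
    IntegrableOn.congr_fun ((integrableOn_cexp_neg_mul hc₁).neg.add hWmInt)
      (fun t ht => (hFpos t ht).symm) measurableSet_Ioi
  have hFnegIoi : IntegrableOn (fun t => F (-t)) (Ioi 0) :=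
    IntegrableOn.congr_fun ((integrableOn_cexp_neg_mul hc₂).neg.add hWpInt)
      (fun t ht => (hFneg t ht).symm) measurableSet_Ioi
  have hFIic : IntegrableOn F (Iic 0) := by
    have m : MeasurableEmbedding (fun x : ℝ => -x) :=
      (Homeomorph.neg ℝ).measurableEmbedding
    rw [IntegrableOn, ← Measure.map_neg_eq_self (volume : Measure ℝ),
      m.restrict_map, m.integrable_map_iff]
    have : (fun x : ℝ => -x) ⁻¹' (Iic 0) = Ici 0 := by
      ext x; simp
    rw [this]
    have := (integrableOn_Ici_iff_integrableOn_Ioi (f := fun t => F (-t))).mpr hFnegIoi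
    exact this.congr_fun (fun t _ => rfl) measurableSet_Ici
  have hFint : Integrable F := by
    rw [← integrableOn_univ, ← Iic_union_Ioi (a := (0:ℝ)), integrableOn_union]
    exact ⟨hFIic, hFIoi⟩
  refine ⟨hFint, ?_⟩
  -- compute the integral of F
  have hsplitF : (∫ t, F t) = (∫ t in Iic (0:ℝ), F t) + ∫ t in Ioi (0:ℝ), F t := by
    rw [← setIntegral_univ, ← Iic_union_Ioi (a := (0:ℝ)),
      setIntegral_union (Iic_disjoint_Ioi le_rfl) measurableSet_Ioi hFIic hFIoi]
  have hIic : (∫ t in Iic (0:ℝ), F t) = -(1 / (1/2 - q)) + ∫ t in Ioi (0:ℝ), Wp t := by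
    have := integral_comp_neg_Ioi (0:ℝ) F
    rw [neg_zero] at this
    rw [← this, setIntegral_congr_fun measurableSet_Ioi
      (fun t ht => hFneg t ht : EqOn (fun t => F (-t))
        (fun t => -Complex.exp (-(t * (1/2 - q))) + Wp t) (Ioi 0)),
      integral_add (f := fun t : ℝ => -Complex.exp (-(↑t * (1/2 - q))))
        ((integrableOn_cexp_neg_mul hc₂).neg) hWpInt, integral_neg,
      integral_cexp_neg_mul hc₂]
  have hIoi : (∫ t in Ioi (0:ℝ), F t) = -(1 / (q + 1/2)) + ∫ t in Ioi (0:ℝ), Wm t := by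
    rw [setIntegral_congr_fun measurableSet_Ioi
      (fun t ht => hFpos t ht : EqOn F
        (fun t => -Complex.exp (-(t * (q + 1/2))) + Wm t) (Ioi 0)),
      integral_add (f := fun t : ℝ => -Complex.exp (-(↑t * (q + 1/2))))
        ((integrableOn_cexp_neg_mul hc₁).neg) hWmInt, integral_neg,
      integral_cexp_neg_mul hc₁]
  -- identify the left-hand side with the completed zeta function
  have hs0 : (q + 1/2 : ℂ) ≠ 0 := fun h => by rw [h] at hc₁; simp at hc₁
  have hΛ₀ : completedRiemannZeta₀ (q + 1/2) =
      (∫ t in Ioi (0:ℝ), Wp t) + ∫ t in Ioi (0:ℝ), Wm t := by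
    have h2 : completedRiemannZeta₀ (q + 1/2)
        = (hurwitzEvenFEPair 0).Λ₀ ((q + 1/2)/2) / 2 := rfl
    rw [h2, show ((q + 1/2 : ℂ))/2 = q/2 + 1/4 by ring, ← hval]
    rw [show mellin (hurwitzEvenFEPair 0).f_modif (q/2 + 1/4)
      = ∫ x in Ioi (0:ℝ), (x:ℂ) ^ (q/2 + 1/4 - 1) • (hurwitzEvenFEPair 0).f_modif x from rfl]
    rw [hIoi0, hsubP, hsubN]
    ring
  have hLHS : (Real.pi : ℂ) ^ (-q / 2 - 1 / 4) * Complex.Gamma (q / 2 + 1 / 4)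
      * riemannZeta (q + 1 / 2) = completedRiemannZeta (q + 1/2) := by
    rw [show (-q / 2 - 1 / 4 : ℂ) = -(q + 1/2)/2 by ring,
      show (q / 2 + 1 / 4 : ℂ) = (q + 1/2)/2 by ring, ← Complex.Gammaℝ_def,
      riemannZeta_def_of_ne_zero hs0,
      mul_div_cancel₀ _ (Complex.Gammaℝ_ne_zero_of_re_pos hc₁)]
  rw [hLHS, completedRiemannZeta_eq, hΛ₀, hsplitF, hIic, hIoi,
    show (1 - (q + 1/2) : ℂ) = 1/2 - q by ring]
  ring

end CompletedZetaAuxHelpers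
end
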